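/- arXiv:2307.06685 — 4 statements merged into one kernel-verified Lean document; each statement's English description precedes it below -/
import Mathlib

section
/- Let q ≥ 2 be an integer. There exists a constant C > 0 such that the following holds: for every twice differentiable function g : (0,1) → ℝ with ∫_0^1 g(t) dt = 1 and ‖g″‖_∞ = sup_{(0,1)} |g″| < ∞, every n ≥ 1, every x ∈ (0,1), and every choice of points ξ_{n,j} ∈ (q^{−n} j, q^{−n}(j+1)) for j = 0,…,q^n−1, one has |g_n(x) − 1 − q^{−2n}(x − 1/2) Σ_{j=0}^{q^n−1} g′(ξ_{n,j})| ≤ C ‖g″‖_∞ q^{−2n}. -/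
set_option maxHeartbeats 1000000


open MeasureTheory Set

/-- `g_n(x) = q^{−n} Σ_{j=0}^{q^n−1} g(q^{−n}(j+x))`. -/
noncomputable def gIter (q : ℕ) (g : ℝ → ℝ) (n : ℕ) (x : ℝ) : ℝ :=
  (q : ℝ) ^ (-(n : ℤ)) * ∑ j ∈ Finset.range (q ^ n), g (((j : ℝ) + x) / (q : ℝ) ^ n)

theorem stmt11
    (q : ℕ) (hq : 2 ≤ q) :
    ∃ C : ℝ, 0 < C ∧
      ∀ (g g' g'' : ℝ → ℝ),
        (∀ x ∈ Set.Ioo (0:ℝ) 1, HasDerivAt g (g' x) x) →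
        (∀ x ∈ Set.Ioo (0:ℝ) 1, HasDerivAt g' (g'' x) x) →
        (∫ t in Set.Ioo (0:ℝ) 1, g t = 1) →
        -- `‖g″‖_∞ < ∞`
        BddAbove ((fun x => |g'' x|) '' Set.Ioo (0:ℝ) 1) →
        ∀ n : ℕ, 1 ≤ n → ∀ x ∈ Set.Ioo (0:ℝ) 1, ∀ ξ : ℕ → ℝ,
          (∀ j < q ^ n, ξ j ∈ Set.Ioo ((j : ℝ) / (q : ℝ) ^ n) (((j : ℝ) + 1) / (q : ℝ) ^ n)) →
          |gIter q g n x - 1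
              - (q : ℝ) ^ (-(2 * n : ℤ)) * (x - 1 / 2) *
                  ∑ j ∈ Finset.range (q ^ n), g' (ξ j)|
            ≤ C * sSup ((fun y => |g'' y|) '' Set.Ioo (0:ℝ) 1) * (q : ℝ) ^ (-(2 * n : ℤ)) := by
  have hq1 : (1:ℝ) < (q:ℝ) := by exact_mod_cast lt_of_lt_of_le one_lt_two hq
  have hq0 : (0:ℝ) < (q:ℝ) := lt_trans zero_lt_one hq1
  refine ⟨1, one_pos, ?_⟩
  intro g g' g'' hg hg' hint hbdd n _hn x hx ξ hξ
  set M := sSup ((fun y => |g'' y|) '' Set.Ioo (0:ℝ) 1) with hMdef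
  set c : ℝ := (q:ℝ) ^ n with hcdef
  have hc : (0:ℝ) < c := pow_pos hq0 n
  have hMb : ∀ y ∈ Set.Ioo (0:ℝ) 1, |g'' y| ≤ M := fun y hy => le_csSup hbdd ⟨y, hy, rfl⟩
  have hM0 : (0:ℝ) ≤ M := le_trans (abs_nonneg _) (hMb (1/2) (by norm_num))
  have hqn : (q:ℝ) ^ (-(n : ℤ)) = 1 / c := by
    rw [hcdef, zpow_neg, zpow_natCast, one_div]
  have hq2n : (q:ℝ) ^ (-(2 * n : ℤ)) = 1 / c ^ 2 := by
    rw [hcdef, show (-(2 * n : ℤ)) = -((2*n : ℕ) : ℤ) by push_cast; ring, zpow_neg,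
      zpow_natCast, pow_mul', one_div]
  -- Lipschitz bound for g'
  have hlip : ∀ y ∈ Set.Ioo (0:ℝ) 1, ∀ z ∈ Set.Ioo (0:ℝ) 1, |g' y - g' z| ≤ M * |y - z| := by
    intro y hy z hz
    have := Convex.norm_image_sub_le_of_norm_hasDerivWithin_le
      (f := g') (f' := g'') (s := Set.Ioo (0:ℝ) 1)
      (fun w hw => (hg' w hw).hasDerivWithinAt) (fun w hw => hMb w hw)
      (convex_Ioo 0 1) hz hy
    simpa [Real.norm_eq_abs] using this
  have hgInt : IntegrableOn g (Set.Ioo (0:ℝ) 1) := by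
    by_contra h
    rw [MeasureTheory.integral_undef h] at hint
    norm_num at hint
  -- subinterval containment
  have hsub : ∀ j : ℕ, j < q ^ n → Set.Ioo ((j:ℝ)/c) (((j:ℝ)+1)/c) ⊆ Set.Ioo (0:ℝ) 1 := by
    intro j hj s hs
    have h1 : (0:ℝ) ≤ (j:ℝ)/c := by positivity
    have hjc : (j:ℝ) + 1 ≤ c := by
      rw [hcdef]
      exact_mod_cast Nat.succ_le_of_lt hj
    have h2 : ((j:ℝ)+1)/c ≤ 1 := by
      rw [div_le_one hc]; exact hjc
    exact ⟨lt_of_le_of_lt h1 hs.1, lt_of_lt_of_le hs.2 h2⟩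
  -- the sample point (j+x)/c lies in the j-th interval
  have hxj : ∀ j : ℕ, ((j:ℝ)+x)/c ∈ Set.Ioo ((j:ℝ)/c) (((j:ℝ)+1)/c) := by
    intro j
    constructor
    · gcongr
      linarith [hx.1]
    · gcongr
      linarith [hx.2]
  -- key pointwise Taylor-type estimate
  have hkey : ∀ j : ℕ, j < q ^ n → ∀ s ∈ Set.Ioo ((j:ℝ)/c) (((j:ℝ)+1)/c),
      |g (((j:ℝ)+x)/c) - g s - g' (ξ j) * ((((j:ℝ)+x)/c) - s)| ≤ M / c ^ 2 := by
    intro j hj s hs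
    have hξj := hξ j hj
    have hba : ((j:ℝ)+1)/c - (j:ℝ)/c = 1/c := by field_simp; ring
    have hder : ∀ w ∈ Set.Ioo ((j:ℝ)/c) (((j:ℝ)+1)/c),
        HasDerivWithinAt (fun w => g w - g' (ξ j) * w) (g' w - g' (ξ j))
          (Set.Ioo ((j:ℝ)/c) (((j:ℝ)+1)/c)) w := by
      intro w hw
      have h1 : HasDerivAt (fun w => g w - g' (ξ j) * w) (g' w - g' (ξ j) * 1) w :=
        (hg w (hsub j hj hw)).sub ((hasDerivAt_id w).const_mul (g' (ξ j)))
      simpa using h1.hasDerivWithinAt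
    have hbound : ∀ w ∈ Set.Ioo ((j:ℝ)/c) (((j:ℝ)+1)/c), ‖g' w - g' (ξ j)‖ ≤ M / c := by
      intro w hw
      have h1 : |g' w - g' (ξ j)| ≤ M * |w - ξ j| :=
        hlip w (hsub j hj hw) (ξ j) (hsub j hj hξj)
      have h2 : |w - ξ j| ≤ 1/c := by
        rw [abs_le]
        constructor <;> [linarith [hw.1, hξj.2, hba]; linarith [hw.2, hξj.1, hba]]
      have h3 : M * |w - ξ j| ≤ M * (1/c) := mul_le_mul_of_nonneg_left h2 hM0
      rw [Real.norm_eq_abs]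
      calc |g' w - g' (ξ j)| ≤ M * (1/c) := le_trans h1 h3
        _ = M / c := by ring
    have hmv := Convex.norm_image_sub_le_of_norm_hasDerivWithin_le hder hbound
      (convex_Ioo _ _) hs (hxj j)
    have heq : g (((j:ℝ)+x)/c) - g s - g' (ξ j) * ((((j:ℝ)+x)/c) - s)
        = (g (((j:ℝ)+x)/c) - g' (ξ j) * (((j:ℝ)+x)/c)) - (g s - g' (ξ j) * s) := by ring
    have hxs : |(((j:ℝ)+x)/c) - s| ≤ 1/c := by
      have h4 := hxj j
      rw [abs_le]
      constructor <;> [linarith [h4.1, hs.2, hba]; linarith [h4.2, hs.1, hba]]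
    rw [heq]
    have := hmv
    rw [Real.norm_eq_abs, Real.norm_eq_abs] at this
    calc |(g (((j:ℝ)+x)/c) - g' (ξ j) * (((j:ℝ)+x)/c)) - (g s - g' (ξ j) * s)|
        ≤ M / c * |(((j:ℝ)+x)/c) - s| := this
      _ ≤ M / c * (1/c) := mul_le_mul_of_nonneg_left hxs (by positivity)
      _ = M / c ^ 2 := by ring
  -- interval integrability of g on each subinterval
  have hgj : ∀ j : ℕ, j < q ^ n → IntervalIntegrable g volume ((j:ℝ)/c) (((j:ℝ)+1)/c) := by
    intro j hj
    have hab : (j:ℝ)/c ≤ ((j:ℝ)+1)/c := by gcongr; linarith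
    rw [intervalIntegrable_iff, Set.uIoc_of_le hab]
    exact (integrableOn_Ioc_iff_integrableOn_Ioo (by simp)).2 (hgInt.mono_set (hsub j hj))
  -- splitting the integral of g
  have hsplit : ∑ j ∈ Finset.range (q ^ n), (∫ s in ((j:ℝ)/c)..(((j:ℝ)+1)/c), g s) = 1 := by
    have h0 := intervalIntegral.sum_integral_adjacent_intervals
      (a := fun k : ℕ => (k:ℝ)/c) (μ := volume) (f := g) (n := q ^ n)
      (fun k hk => by
        have e : ((k+1 : ℕ):ℝ)/c = ((k:ℝ)+1)/c := by push_cast; ring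
        simpa [e] using hgj k hk)
    have e2 : ∀ k : ℕ, ((k+1 : ℕ):ℝ)/c = ((k:ℝ)+1)/c := by intro k; push_cast; ring
    simp only [e2] at h0
    rw [h0]
    have e0 : ((0:ℕ):ℝ)/c = 0 := by simp
    have e1 : (((q ^ n : ℕ)):ℝ)/c = 1 := by
      rw [hcdef]; push_cast; field_simp
    rw [e0, e1, intervalIntegral.integral_of_le zero_le_one,
      MeasureTheory.integral_Ioc_eq_integral_Ioo]
    exact hint
  -- value of the per-interval error integral
  have hEj : ∀ j : ℕ, j < q ^ n →
      (∫ s in ((j:ℝ)/c)..(((j:ℝ)+1)/c),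
        (g (((j:ℝ)+x)/c) - g s - g' (ξ j) * ((((j:ℝ)+x)/c) - s)))
      = g (((j:ℝ)+x)/c) / c - (∫ s in ((j:ℝ)/c)..(((j:ℝ)+1)/c), g s)
        - g' (ξ j) * ((x - 1/2)/c^2) := by
    intro j hj
    have h1 : IntervalIntegrable (fun _ : ℝ => g (((j:ℝ)+x)/c)) volume ((j:ℝ)/c) (((j:ℝ)+1)/c) :=
      intervalIntegrable_const
    have h2 := hgj j hj
    have h3 : IntervalIntegrable (fun s : ℝ => g' (ξ j) * ((((j:ℝ)+x)/c) - s)) volume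
        ((j:ℝ)/c) (((j:ℝ)+1)/c) := by
      apply Continuous.intervalIntegrable
      continuity
    have hid : IntervalIntegrable (fun s : ℝ => s) volume ((j:ℝ)/c) (((j:ℝ)+1)/c) :=
      continuous_id.intervalIntegrable _ _
    rw [intervalIntegral.integral_sub (h1.sub h2) h3, intervalIntegral.integral_sub h1 h2,
      intervalIntegral.integral_const, intervalIntegral.integral_const_mul,
      intervalIntegral.integral_sub intervalIntegrable_const hid,
      intervalIntegral.integral_const, integral_id]
    simp only [smul_eq_mul]
    have hc' : c ≠ 0 := ne_of_gt hc
    field_simp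
    ring
  -- the main identity
  have hmain : gIter q g n x - 1
      - (q : ℝ) ^ (-(2 * n : ℤ)) * (x - 1 / 2) * ∑ j ∈ Finset.range (q ^ n), g' (ξ j)
      = ∑ j ∈ Finset.range (q ^ n),
          ∫ s in ((j:ℝ)/c)..(((j:ℝ)+1)/c),
            (g (((j:ℝ)+x)/c) - g s - g' (ξ j) * ((((j:ℝ)+x)/c) - s)) := by
    rw [Finset.sum_congr rfl (fun j hj => hEj j (Finset.mem_range.1 hj))]
    rw [Finset.sum_sub_distrib, Finset.sum_sub_distrib, hsplit]
    simp only [gIter]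
    rw [← hcdef, hqn, hq2n, ← Finset.sum_div, ← Finset.sum_mul]
    ring
  rw [hmain]
  -- bound each term and sum
  have hterm : ∀ j ∈ Finset.range (q ^ n),
      |∫ s in ((j:ℝ)/c)..(((j:ℝ)+1)/c),
        (g (((j:ℝ)+x)/c) - g s - g' (ξ j) * ((((j:ℝ)+x)/c) - s))| ≤ M / c ^ 2 * (1/c) := by
    intro j hj
    have hj' := Finset.mem_range.1 hj
    have hab : (j:ℝ)/c ≤ ((j:ℝ)+1)/c := by gcongr; linarith
    have hae : ∀ᵐ s : ℝ, s ∈ Set.uIoc ((j:ℝ)/c) (((j:ℝ)+1)/c) →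
        ‖g (((j:ℝ)+x)/c) - g s - g' (ξ j) * ((((j:ℝ)+x)/c) - s)‖ ≤ M / c ^ 2 := by
      have hne : ∀ᵐ s : ℝ, s ≠ ((j:ℝ)+1)/c := by
        rw [MeasureTheory.ae_iff]
        simp [not_not, Set.setOf_eq_eq_singleton, Real.volume_singleton]
      filter_upwards [hne] with s hsne hmem
      rw [Set.uIoc_of_le hab] at hmem
      have hmem' : s ∈ Set.Ioo ((j:ℝ)/c) (((j:ℝ)+1)/c) :=
        ⟨hmem.1, lt_of_le_of_ne hmem.2 hsne⟩
      rw [Real.norm_eq_abs]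
      exact hkey j hj' s hmem'
    have := intervalIntegral.norm_integral_le_of_norm_le_const_ae hae
    have habs : |((j:ℝ)+1)/c - (j:ℝ)/c| = 1/c := by
      rw [abs_of_nonneg (by linarith)]
      field_simp
      ring
    rw [habs, Real.norm_eq_abs] at this
    exact this
  calc |∑ j ∈ Finset.range (q ^ n),
          ∫ s in ((j:ℝ)/c)..(((j:ℝ)+1)/c),
            (g (((j:ℝ)+x)/c) - g s - g' (ξ j) * ((((j:ℝ)+x)/c) - s))|
      ≤ ∑ j ∈ Finset.range (q ^ n),
          |∫ s in ((j:ℝ)/c)..(((j:ℝ)+1)/c),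
            (g (((j:ℝ)+x)/c) - g s - g' (ξ j) * ((((j:ℝ)+x)/c) - s))| :=
        Finset.abs_sum_le_sum_abs _ _
    _ ≤ ∑ _j ∈ Finset.range (q ^ n), M / c ^ 2 * (1/c) := Finset.sum_le_sum hterm
    _ = ((q ^ n : ℕ):ℝ) * (M / c ^ 2 * (1/c)) := by
        rw [Finset.sum_const, Finset.card_range, nsmul_eq_mul]
    _ = 1 * M * (q:ℝ) ^ (-(2 * n : ℤ)) := by
        rw [hq2n]
        have hcast : ((q ^ n : ℕ):ℝ) = c := by rw [hcdef]; push_cast; ring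
        rw [hcast]
        have hc' : c ≠ 0 := ne_of_gt hc
        field_simp
end

section
/- Let q ≥ 2 be an integer, let X be a random variable with values in [0,1) whose law has density f concentrated on (0,1), and let g : (0,1) → ℝ be differentiable with ∫_0^1 g(t) dt = 1 and ‖g′‖_∞ < ∞. Then for every n ≥ 1, the law P_n of T^n(X) satisfies d_TV(P_n, μ) ≤ (1/2)‖f − g‖_1 + (1/6) q^{−2n} Σ_{j=0}^{q^n−1} ‖g′_{n,j}‖_∞ ≤ (1/2)‖f − g‖_1 + (1/6) q^{−n} ‖g′‖_∞. -/
open MeasureTheory Set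

/-- The base-`q` map `T(x) = q·x − ⌊q·x⌋`. -/
noncomputable def T (q : ℕ) : ℝ → ℝ := fun x => Int.fract ((q : ℝ) * x)

/-- Total variation distance `d_TV(ν₁,ν₂) = sup_{Borel A} |ν₁(A) − ν₂(A)|`. -/
noncomputable def dTV (ν₁ ν₂ : Measure ℝ) : ℝ :=
  ⨆ A : {A : Set ℝ // MeasurableSet A}, |(ν₁ A.1).toReal - (ν₂ A.1).toReal|

section helpers

lemma half_trick {w : ℝ → ℝ} {B : Set ℝ} (hB : MeasurableSet B) (hBsub : B ⊆ Ioo (0:ℝ) 1)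
    (hw : IntegrableOn w (Ioo (0:ℝ) 1)) (hzero : ∫ x in Ioo (0:ℝ) 1, w x = 0) :
    |∫ x in B, w x| ≤ (1/2) * ∫ x in Ioo (0:ℝ) 1, |w x| := by
  have hC : MeasurableSet (Ioo (0:ℝ) 1 \ B) := measurableSet_Ioo.diff hB
  have hwB : IntegrableOn w B volume := hw.mono_set hBsub
  have hwC : IntegrableOn w (Ioo (0:ℝ) 1 \ B) volume := hw.mono_set diff_subset
  have hdisj : Disjoint B (Ioo (0:ℝ) 1 \ B) := disjoint_sdiff_self_right
  have hsplit : (∫ x in B, w x) + ∫ x in Ioo (0:ℝ) 1 \ B, w x = 0 := by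
    rw [← setIntegral_union hdisj hC hwB hwC, union_diff_cancel hBsub, hzero]
  have hsplit2 : (∫ x in B, |w x|) + ∫ x in Ioo (0:ℝ) 1 \ B, |w x|
      = ∫ x in Ioo (0:ℝ) 1, |w x| := by
    rw [← setIntegral_union hdisj hC hwB.abs hwC.abs, union_diff_cancel hBsub]
  have h1 : |∫ x in B, w x| ≤ ∫ x in B, |w x| := by
    simpa using norm_integral_le_integral_norm (μ := volume.restrict B) w
  have h2 : |∫ x in Ioo (0:ℝ) 1 \ B, w x| ≤ ∫ x in Ioo (0:ℝ) 1 \ B, |w x| := by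
    simpa using norm_integral_le_integral_norm (μ := volume.restrict (Ioo (0:ℝ) 1 \ B)) w
  have h3 : |∫ x in B, w x| = |∫ x in Ioo (0:ℝ) 1 \ B, w x| := by
    rw [show (∫ x in B, w x) = -(∫ x in Ioo (0:ℝ) 1 \ B, w x) by linarith, abs_neg]
  linarith [abs_nonneg (∫ x in B, w x)]

lemma abs_int_aux (y : ℝ) (hy : y ∈ Icc (0:ℝ) 1) :
    ∫ t in Ioo (0:ℝ) 1, |y - t| = (y^2 + (1-y)^2)/2 := by
  have h1 : ∫ t in Ioo (0:ℝ) 1, |y - t| = ∫ t in (0:ℝ)..1, |y - t| := by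
    rw [intervalIntegral.integral_of_le zero_le_one, integral_Ioc_eq_integral_Ioo]
  rw [h1]
  have hi1 : IntervalIntegrable (fun t => |y - t|) volume 0 y :=
    ((continuous_const.sub continuous_id).abs).intervalIntegrable _ _
  have hi2 : IntervalIntegrable (fun t => |y - t|) volume y 1 :=
    ((continuous_const.sub continuous_id).abs).intervalIntegrable _ _
  rw [← intervalIntegral.integral_add_adjacent_intervals hi1 hi2]
  have e1 : ∫ t in (0:ℝ)..y, |y - t| = ∫ t in (0:ℝ)..y, (y - t) := by
    apply intervalIntegral.integral_congr
    intro t ht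
    rw [uIcc_of_le hy.1] at ht
    show |y - t| = y - t
    exact abs_of_nonneg (by linarith [ht.2])
  have e2 : ∫ t in y..(1:ℝ), |y - t| = ∫ t in y..(1:ℝ), (t - y) := by
    apply intervalIntegral.integral_congr
    intro t ht
    rw [uIcc_of_le hy.2] at ht
    show |y - t| = t - y
    rw [abs_sub_comm]
    exact abs_of_nonneg (by linarith [ht.1])
  rw [e1, e2,
    intervalIntegral.integral_sub intervalIntegrable_const intervalIntegral.intervalIntegrable_id,
    intervalIntegral.integral_sub intervalIntegral.intervalIntegrable_id intervalIntegrable_const]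
  simp [integral_id]
  ring

lemma poly_int : ∫ y in Ioo (0:ℝ) 1, (y^2 + (1-y)^2)/2 = 1/3 := by
  rw [← integral_Ioc_eq_integral_Ioo, ← intervalIntegral.integral_of_le zero_le_one]
  rw [show (fun y : ℝ => (y^2+(1-y)^2)/2) = fun y : ℝ => y^2 - y + 1/2 from funext fun y => by ring]
  have i1 : IntervalIntegrable (fun y:ℝ => y^2 - y) volume 0 1 :=
    ((continuous_pow 2).sub continuous_id).intervalIntegrable _ _
  have i2 : IntervalIntegrable (fun y:ℝ => (1:ℝ)/2) volume 0 1 := intervalIntegrable_const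
  rw [intervalIntegral.integral_add i1 i2,
    intervalIntegral.integral_sub ((continuous_pow 2).intervalIntegrable _ _)
      intervalIntegral.intervalIntegrable_id]
  simp [integral_id, integral_pow]
  norm_num


lemma unfold_integral (N : ℕ) (hN : 0 < N) (u : ℝ → ℝ) (hu : Integrable u)
    (hsupp : ∀ x, x ∉ Ioo (0:ℝ) 1 → u x = 0) (A : Set ℝ) (hA : MeasurableSet A)
    (hAsub : A ⊆ Ico (0:ℝ) 1) :
    ∫ x in (fun x => Int.fract ((N : ℝ) * x)) ⁻¹' A, u x
      = ∑ j ∈ Finset.range N, ((N : ℝ))⁻¹ * ∫ y in A, u ((y + j) / N) := by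
  classical
  have hNr : (0:ℝ) < N := by exact_mod_cast hN
  have hN0 : (N:ℝ) ≠ 0 := hNr.ne'
  have hφ : Measurable fun x : ℝ => Int.fract ((N:ℝ) * x) :=
    (measurable_id.const_mul _).fract
  have hψ : ∀ j : ℕ, Measurable fun x : ℝ => (N:ℝ) * x - (j:ℝ) := fun j =>
    (measurable_id.const_mul _).sub_const _
  have key : Set.indicator ((fun x => Int.fract ((N:ℝ) * x)) ⁻¹' A) u
      = fun x => ∑ j ∈ Finset.range N,
          Set.indicator ((fun x => (N:ℝ) * x - (j:ℝ)) ⁻¹' A) u x := by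
    funext x
    by_cases hux : u x = 0
    · have hzero : ∀ s : Set ℝ, s.indicator u x = 0 := fun s => by
        rw [Set.indicator_apply]; split <;> simp [hux]
      simp only [hzero, Finset.sum_const_zero]
    · have hx : x ∈ Ioo (0:ℝ) 1 := by by_contra h; exact hux (hsupp x h)
      have hfl0 : 0 ≤ ⌊(N:ℝ) * x⌋ := Int.floor_nonneg.mpr (mul_nonneg hNr.le hx.1.le)
      have hflN : ⌊(N:ℝ) * x⌋ < (N:ℤ) := by
        apply Int.floor_lt.mpr
        push_cast
        nlinarith [hx.2, hx.1]
      set j0 : ℕ := (⌊(N:ℝ) * x⌋).toNat with hj0def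
      have hj0cast : (j0 : ℝ) = ((⌊(N:ℝ) * x⌋ : ℤ) : ℝ) := by
        rw [hj0def]
        exact_mod_cast congrArg (fun z : ℤ => (z : ℝ)) (Int.toNat_of_nonneg hfl0)
      have hj0lt : j0 < N := by omega
      have hfr : Int.fract ((N:ℝ)*x) = (N:ℝ)*x - (j0:ℝ) := by
        rw [hj0cast, Int.self_sub_floor]
      have hmem_iff : ∀ j : ℕ, ((N:ℝ) * x - (j:ℝ) ∈ A) → j = j0 := by
        intro j hj
        have h0 := (hAsub hj).1
        have h1 := (hAsub hj).2
        have hfloor : ⌊(N:ℝ)*x⌋ = (j:ℤ) := by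
          apply Int.floor_eq_iff.mpr
          constructor <;> push_cast <;> linarith
        omega
      by_cases hmem : Int.fract ((N:ℝ) * x) ∈ A
      · rw [Set.indicator_of_mem
          (show x ∈ (fun x => Int.fract ((N:ℝ) * x)) ⁻¹' A from hmem)]
        rw [Finset.sum_eq_single_of_mem j0 (Finset.mem_range.mpr hj0lt)]
        · rw [Set.indicator_of_mem
            (show x ∈ (fun x => (N:ℝ) * x - (j0:ℝ)) ⁻¹' A from by
              show (N:ℝ) * x - (j0:ℝ) ∈ A
              rw [← hfr]; exact hmem)]
        · intro b _ hbne
          apply Set.indicator_of_notMem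
          intro hbmem
          exact hbne (hmem_iff b hbmem)
      · rw [Set.indicator_of_notMem
          (show x ∉ (fun x => Int.fract ((N:ℝ) * x)) ⁻¹' A from hmem)]
        symm
        apply Finset.sum_eq_zero
        intro j _
        apply Set.indicator_of_notMem
        intro hjmem
        apply hmem
        have hj : j = j0 := hmem_iff j hjmem
        rw [hfr, ← hj]
        exact hjmem
  rw [← integral_indicator (hφ hA), key, integral_finset_sum]
  · apply Finset.sum_congr rfl
    intro j _
    have heq : (fun x => Set.indicator ((fun x => (N:ℝ)*x - (j:ℝ)) ⁻¹' A) u x)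
        = fun x => Set.indicator A (fun y => u ((y + (j:ℝ))/N)) ((N:ℝ) * x - (j:ℝ)) := by
      funext x
      by_cases hxA : (N:ℝ)*x - (j:ℝ) ∈ A
      · rw [Set.indicator_of_mem
          (show x ∈ (fun x => (N:ℝ)*x - (j:ℝ)) ⁻¹' A from hxA),
          Set.indicator_of_mem hxA]
        congr 1
        field_simp
        ring
      · rw [Set.indicator_of_notMem
          (show x ∉ (fun x => (N:ℝ)*x - (j:ℝ)) ⁻¹' A from hxA),
          Set.indicator_of_notMem hxA]
    rw [heq]
    rw [show (∫ x, Set.indicator A (fun y => u ((y + (j:ℝ))/N)) ((N:ℝ)*x - (j:ℝ)))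
        = |((N:ℝ))⁻¹| • ∫ t, Set.indicator A (fun y => u ((y + (j:ℝ))/N)) (t - (j:ℝ)) from
      Measure.integral_comp_mul_left
        (fun t => Set.indicator A (fun y => u ((y+(j:ℝ))/N)) (t - (j:ℝ))) (N:ℝ)]
    rw [integral_sub_right_eq_self (μ := volume)
        (fun t => Set.indicator A (fun y => u ((y+(j:ℝ))/N)) t) (j:ℝ),
      abs_of_pos (by positivity : (0:ℝ) < ((N:ℝ))⁻¹), smul_eq_mul,
      integral_indicator hA]
  · intro j _
    exact hu.indicator ((hψ j) hA)


lemma T_iter' (q n : ℕ) (x : ℝ) :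
    (T q)^[n + 1] x = Int.fract ((q : ℝ) ^ (n + 1) * x) := by
  induction n generalizing x with
  | zero => simp [T]
  | succ m ih =>
    rw [Function.iterate_succ_apply, ih]
    have h1 : (q : ℝ) ^ (m + 1) * T q x
        = (q : ℝ) ^ (m + 1 + 1) * x - (((q ^ (m + 1) : ℕ) : ℤ) * ⌊(q : ℝ) * x⌋ : ℤ) := by
      rw [T, Int.fract]
      push_cast
      ring
    rw [h1, Int.fract_sub_intCast]

end helpers

theorem stmt12
    {Ω : Type*} [MeasurableSpace Ω] (ℙ : Measure Ω) [IsProbabilityMeasure ℙ]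
    (q : ℕ) (hq : 2 ≤ q)
    (f : ℝ → ℝ) (hf_meas : Measurable f) (hf_nonneg : ∀ x, 0 ≤ f x)
    (hf_supp : ∀ x, x ∉ Set.Ioo (0:ℝ) 1 → f x = 0)
    (X : Ω → ℝ) (hX : Measurable X) (hXrange : ∀ ω, X ω ∈ Set.Ico (0:ℝ) 1)
    (hlaw : Measure.map X ℙ = volume.withDensity (fun x => ENNReal.ofReal (f x)))
    (g g' : ℝ → ℝ)
    (hderiv : ∀ x ∈ Set.Ioo (0:ℝ) 1, HasDerivAt g (g' x) x)
    (hgint : ∫ t in Set.Ioo (0:ℝ) 1, g t = 1)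
    -- `‖g′‖_∞ < ∞`
    (hbdd : BddAbove ((fun x => |g' x|) '' Set.Ioo (0:ℝ) 1))
    (n : ℕ) (hn : 1 ≤ n) :
    dTV (Measure.map (fun ω => (T q)^[n] (X ω)) ℙ) (volume.restrict (Set.Ico (0:ℝ) 1))
      ≤ (1 / 2) * (∫ t in Set.Ioo (0:ℝ) 1, |f t - g t|)
          + (1 / 6) * (q : ℝ) ^ (-(2 * n : ℤ)) *
              ∑ j ∈ Finset.range (q ^ n),
                sSup ((fun y => |g' y|) ''
                  Set.Ioo ((j : ℝ) / (q : ℝ) ^ n) (((j : ℝ) + 1) / (q : ℝ) ^ n))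
    ∧ (1 / 2) * (∫ t in Set.Ioo (0:ℝ) 1, |f t - g t|)
          + (1 / 6) * (q : ℝ) ^ (-(2 * n : ℤ)) *
              ∑ j ∈ Finset.range (q ^ n),
                sSup ((fun y => |g' y|) ''
                  Set.Ioo ((j : ℝ) / (q : ℝ) ^ n) (((j : ℝ) + 1) / (q : ℝ) ^ n))
        ≤ (1 / 2) * (∫ t in Set.Ioo (0:ℝ) 1, |f t - g t|)
            + (1 / 6) * (q : ℝ) ^ (-(n : ℤ)) *
                sSup ((fun y => |g' y|) '' Set.Ioo (0:ℝ) 1) := by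
  classical
  have hq1 : (1:ℝ) < (q:ℝ) := by exact_mod_cast lt_of_lt_of_le one_lt_two hq
  have hq0 : (0:ℝ) < (q:ℝ) := lt_trans one_pos hq1
  set Nn : ℕ := q ^ n with hNn
  have hNn0 : 0 < Nn := pow_pos (by omega) n
  have hNnR : (0:ℝ) < (Nn:ℝ) := by exact_mod_cast hNn0
  have hNne : ((Nn:ℝ)) ≠ 0 := hNnR.ne'
  have hqn : (q:ℝ) ^ n = ((Nn:ℕ):ℝ) := by rw [hNn]; push_cast; ring
  have h2n : (q:ℝ) ^ (-(2 * n : ℤ)) = ((Nn:ℝ))⁻¹ * ((Nn:ℝ))⁻¹ := by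
    rw [zpow_neg, ← mul_inv]
    congr 1
    rw [show ((2 * n : ℤ)) = ((2 * n : ℕ) : ℤ) by push_cast; ring, zpow_natCast, two_mul, pow_add,
      hqn]
  have h1n : (q:ℝ) ^ (-(n : ℤ)) = ((Nn:ℝ))⁻¹ := by
    rw [zpow_neg, zpow_natCast, hqn]
  rw [hqn, h2n, h1n]
  set h : ℝ := ((Nn:ℝ))⁻¹ with hh
  have hhpos : 0 < h := by positivity
  -- iterate of T
  have hTit : (fun ω => (T q)^[n] (X ω)) = (fun x => Int.fract ((Nn:ℝ) * x)) ∘ X := by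
    funext ω
    obtain ⟨m, rfl⟩ : ∃ m, n = m + 1 := ⟨n - 1, by omega⟩
    simp only [Function.comp_apply, T_iter']
    rw [← hqn]
  have hφmeas : Measurable fun x : ℝ => Int.fract ((Nn:ℝ) * x) :=
    (measurable_id.const_mul _).fract
  have hmap : Measure.map (fun ω => (T q)^[n] (X ω)) ℙ
      = Measure.map (fun x => Int.fract ((Nn:ℝ) * x))
          (volume.withDensity fun x => ENNReal.ofReal (f x)) := by
    rw [hTit, ← Measure.map_map hφmeas hX, hlaw]
  -- f is an integrable probability density
  have hflint : ∫⁻ x, ENNReal.ofReal (f x) = 1 := by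
    have hprob : IsProbabilityMeasure (Measure.map X ℙ) := Measure.isProbabilityMeasure_map hX.aemeasurable
    have h1 : (volume.withDensity fun x => ENNReal.ofReal (f x)) univ = 1 := by
      rw [← hlaw]; exact hprob.measure_univ
    rwa [withDensity_apply _ MeasurableSet.univ, Measure.restrict_univ] at h1
  have hfint : Integrable f := by
    refine ⟨hf_meas.aestronglyMeasurable, ?_⟩
    rw [hasFiniteIntegral_iff_ofReal (Filter.Eventually.of_forall hf_nonneg), hflint]
    exact ENNReal.one_lt_top
  have hfint1 : ∫ x, f x = 1 := by
    have h2 := ofReal_integral_eq_lintegral_ofReal hfint (Filter.Eventually.of_forall hf_nonneg)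
    rw [hflint] at h2
    have h0 : 0 ≤ ∫ x, f x := integral_nonneg hf_nonneg
    have := congrArg ENNReal.toReal h2
    rwa [ENNReal.toReal_ofReal h0, ENNReal.toReal_one] at this
  -- g : continuity, Lipschitz, boundedness, integrability on (0,1)
  have hgcont : ContinuousOn g (Ioo (0:ℝ) 1) :=
    fun x hx => ((hderiv x hx).continuousAt).continuousWithinAt
  set S : ℝ := sSup ((fun x => |g' x|) '' Ioo (0:ℝ) 1) with hSdef
  have hhalfmem : (1/2 : ℝ) ∈ Ioo (0:ℝ) 1 := by norm_num
  have hS0 : 0 ≤ S :=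
    le_trans (abs_nonneg (g' (1/2))) (le_csSup hbdd (mem_image_of_mem _ hhalfmem))
  have hlip : ∀ s : Set ℝ, s ⊆ Ioo (0:ℝ) 1 → Convex ℝ s →
      ∀ C : ℝ, (∀ x ∈ s, |g' x| ≤ C) → ∀ a ∈ s, ∀ b ∈ s, |g a - g b| ≤ C * |a - b| := by
    intro s hs hconv C hC a ha b hb
    have := hconv.norm_image_sub_le_of_norm_hasDerivWithin_le
      (f := g) (f' := g')
      (fun x hx => ((hderiv x (hs hx)).hasDerivWithinAt))
      (fun x hx => by simpa using hC x hx) hb ha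
    simpa [Real.norm_eq_abs] using this
  have hgbd : ∀ x ∈ Ioo (0:ℝ) 1, |g x| ≤ |g (1/2)| + S := by
    intro x hx
    have hb : ∀ t ∈ Ioo (0:ℝ) 1, |g' t| ≤ S :=
      fun t ht => le_csSup hbdd (mem_image_of_mem _ ht)
    have hl := hlip (Ioo 0 1) subset_rfl (convex_Ioo _ _) S hb x hx (1/2) hhalfmem
    have habs : |x - 1/2| ≤ 1 := by
      rw [abs_le]; constructor <;> [linarith [hx.1]; linarith [hx.2]]
    have h4 : |g x| ≤ |g x - g (1/2)| + |g (1/2)| := by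
      calc |g x| = |(g x - g (1/2)) + g (1/2)| := by ring_nf
        _ ≤ |g x - g (1/2)| + |g (1/2)| := abs_add_le _ _
    nlinarith [mul_le_mul_of_nonneg_left habs hS0]
  haveI hfin : IsFiniteMeasure (volume.restrict (Ioo (0:ℝ) 1)) := by
    constructor
    rw [Measure.restrict_apply_univ, Real.volume_Ioo]
    exact ENNReal.ofReal_lt_top
  have hgion : IntegrableOn g (Ioo (0:ℝ) 1) := by
    apply Integrable.mono' (integrable_const (|g (1/2)| + S))
      (hgcont.aestronglyMeasurable measurableSet_Ioo)
    filter_upwards [ae_restrict_mem measurableSet_Ioo] with x hx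
    simpa using hgbd x hx
  set G : ℝ → ℝ := indicator (Ioo (0:ℝ) 1) g with hGdef
  have hGint : Integrable G := (integrable_indicator_iff measurableSet_Ioo).mpr hgion
  have hGeq : ∀ x ∈ Ioo (0:ℝ) 1, G x = g x := fun x hx => indicator_of_mem hx g
  have hGsupp : ∀ x, x ∉ Ioo (0:ℝ) 1 → G x = 0 := fun x hx => indicator_of_notMem hx g
  have hGint1 : ∫ x, G x = 1 := by
    rw [hGdef, integral_indicator measurableSet_Ioo, hgint]

  -- the subintervals
  set M : ℕ → ℝ := fun j =>
    sSup ((fun y => |g' y|) '' Ioo ((j:ℝ)/(Nn:ℝ)) (((j:ℝ)+1)/(Nn:ℝ))) with hMdef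
  have hIj : ∀ j : ℕ, j < Nn → Ioo ((j:ℝ)/(Nn:ℝ)) (((j:ℝ)+1)/(Nn:ℝ)) ⊆ Ioo (0:ℝ) 1 := by
    intro j hj
    apply Ioo_subset_Ioo
    · positivity
    · rw [div_le_one hNnR]
      have : (j:ℝ) + 1 ≤ (Nn:ℝ) := by exact_mod_cast hj
      linarith
  have hIjne : ∀ j : ℕ, (Ioo ((j:ℝ)/(Nn:ℝ)) (((j:ℝ)+1)/(Nn:ℝ))).Nonempty := by
    intro j
    rw [nonempty_Ioo]
    exact div_lt_div_of_pos_right (by linarith) hNnR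
  have hMbdd : ∀ j : ℕ, j < Nn →
      BddAbove ((fun y => |g' y|) '' Ioo ((j:ℝ)/(Nn:ℝ)) (((j:ℝ)+1)/(Nn:ℝ))) :=
    fun j hj => hbdd.mono (image_mono (hIj j hj))
  have hM0 : ∀ j : ℕ, j < Nn → 0 ≤ M j := by
    intro j hj
    obtain ⟨y, hy⟩ := hIjne j
    exact le_trans (abs_nonneg (g' y)) (le_csSup (hMbdd j hj) (mem_image_of_mem _ hy))
  have hMS : ∀ j : ℕ, j < Nn → M j ≤ S :=
    fun j hj => csSup_le_csSup hbdd ((hIjne j).image _) (image_mono (hIj j hj))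
  have hMbound : ∀ j : ℕ, j < Nn → ∀ x ∈ Ioo ((j:ℝ)/(Nn:ℝ)) (((j:ℝ)+1)/(Nn:ℝ)), |g' x| ≤ M j :=
    fun j hj x hx => le_csSup (hMbdd j hj) (mem_image_of_mem _ hx)
  -- integrability of rescaled compositions
  have hcomp : ∀ u : ℝ → ℝ, Integrable u → ∀ j : ℕ,
      Integrable (fun y : ℝ => u ((y + (j:ℝ)) / (Nn:ℝ))) := by
    intro u hu j
    have h1 : Integrable (fun t : ℝ => u (((Nn:ℝ))⁻¹ * t)) :=
      hu.comp_mul_left' (inv_ne_zero hNne)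
    have h2 := h1.comp_add_right (j:ℝ)
    have h3 : (fun y : ℝ => u ((y + (j:ℝ)) / (Nn:ℝ)))
        = fun y : ℝ => (fun t : ℝ => u (((Nn:ℝ))⁻¹ * t)) (y + (j:ℝ)) := by
      funext y
      simp only []
      rw [div_eq_inv_mul]
    rw [h3]
    exact h2

  -- unfolding over the whole interval
  have hAuniv : ∀ u : ℝ → ℝ, Integrable u → (∀ x, x ∉ Ioo (0:ℝ) 1 → u x = 0) →
      ∫ x, u x = ∑ j ∈ Finset.range Nn, h * ∫ y in Ioo (0:ℝ) 1, u ((y+(j:ℝ))/(Nn:ℝ)) := by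
    intro u hu hus
    have hres := unfold_integral Nn hNn0 u hu hus (Ico 0 1) measurableSet_Ico subset_rfl
    have hpre : (fun x : ℝ => Int.fract ((Nn:ℝ) * x)) ⁻¹' (Ico 0 1) = univ := by
      ext x
      simp [Int.fract_nonneg, Int.fract_lt_one]
    rw [hpre, Measure.restrict_univ] at hres
    rw [hres]
    exact Finset.sum_congr rfl fun j _ => by rw [integral_Ico_eq_integral_Ioo]
  -- the L¹ distance
  set D : ℝ := ∫ t in Ioo (0:ℝ) 1, |f t - g t| with hDdef
  have hfG : ∀ x, x ∉ Ioo (0:ℝ) 1 → |f x - G x| = 0 := by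
    intro x hx
    rw [hf_supp x hx, hGsupp x hx]
    simp
  have hfGint : Integrable (fun x => |f x - G x|) := (hfint.sub hGint).abs
  have hDeq : ∫ x, |f x - G x| = D := by
    rw [hDdef]
    have hind : (fun x => |f x - G x|) = indicator (Ioo (0:ℝ) 1) (fun x => |f x - G x|) := by
      funext x
      by_cases hx : x ∈ Ioo (0:ℝ) 1
      · rw [indicator_of_mem hx]
      · rw [indicator_of_notMem hx, hfG x hx]
    rw [hind, integral_indicator measurableSet_Ioo]
    apply setIntegral_congr_fun measurableSet_Ioo
    intro x hx
    show |f x - G x| = |f x - g x|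
    rw [hGeq x hx]
  have hfeq1 : ∫ x, f x = 1 := hfint1
  -- the averages of G over the small intervals
  set c : ℕ → ℝ := fun j => ∫ y in Ioo (0:ℝ) 1, G ((y+(j:ℝ))/(Nn:ℝ)) with hcdef
  have hsumf : ∑ j ∈ Finset.range Nn, h * ∫ y in Ioo (0:ℝ) 1, f ((y+(j:ℝ))/(Nn:ℝ)) = 1 := by
    rw [← hAuniv f hfint hf_supp, hfeq1]
  have hsumc : ∑ j ∈ Finset.range Nn, h * c j = 1 := by
    rw [hcdef, ← hAuniv G hGint hGsupp, hGint1]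
  have hsumfG : ∑ j ∈ Finset.range Nn,
      h * ∫ y in Ioo (0:ℝ) 1, |f ((y+(j:ℝ))/(Nn:ℝ)) - G ((y+(j:ℝ))/(Nn:ℝ))| = D := by
    rw [← hDeq]
    exact (hAuniv (fun x => |f x - G x|) hfGint hfG).symm

  -- per-interval mean estimate
  have hGjIntOn : ∀ j : ℕ, IntegrableOn (fun y : ℝ => G ((y+(j:ℝ))/(Nn:ℝ))) (Ioo (0:ℝ) 1) :=
    fun j => (hcomp G hGint j).integrableOn
  have hfjIntOn : ∀ j : ℕ, IntegrableOn (fun y : ℝ => f ((y+(j:ℝ))/(Nn:ℝ))) (Ioo (0:ℝ) 1) :=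
    fun j => (hcomp f hfint j).integrableOn
  have hmemI : ∀ j : ℕ, ∀ y ∈ Ioo (0:ℝ) 1,
      (y+(j:ℝ))/(Nn:ℝ) ∈ Ioo ((j:ℝ)/(Nn:ℝ)) (((j:ℝ)+1)/(Nn:ℝ)) := by
    intro j y hy
    constructor
    · exact div_lt_div_of_pos_right (by linarith [hy.1]) hNnR
    · exact div_lt_div_of_pos_right (by linarith [hy.2]) hNnR
  have hlipj : ∀ j : ℕ, j < Nn → ∀ a ∈ Ioo (0:ℝ) 1, ∀ b ∈ Ioo (0:ℝ) 1,
      |G ((a+(j:ℝ))/(Nn:ℝ)) - G ((b+(j:ℝ))/(Nn:ℝ))| ≤ (M j * h) * |a - b| := by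
    intro j hj a ha b hb
    have hma := hmemI j a ha
    have hmb := hmemI j b hb
    rw [hGeq _ (hIj j hj hma), hGeq _ (hIj j hj hmb)]
    have hl := hlip (Ioo ((j:ℝ)/(Nn:ℝ)) (((j:ℝ)+1)/(Nn:ℝ))) (hIj j hj) (convex_Ioo _ _)
      (M j) (hMbound j hj) _ hma _ hmb
    have habs : |(a+(j:ℝ))/(Nn:ℝ) - (b+(j:ℝ))/(Nn:ℝ)| = |a - b| * h := by
      rw [show (a+(j:ℝ))/(Nn:ℝ) - (b+(j:ℝ))/(Nn:ℝ) = (a - b) * h by rw [hh]; field_simp; ring,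
        abs_mul, abs_of_pos hhpos]
    rw [habs] at hl
    calc |g ((a+(j:ℝ))/(Nn:ℝ)) - g ((b+(j:ℝ))/(Nn:ℝ))| ≤ M j * (|a - b| * h) := hl
      _ = (M j * h) * |a - b| := by ring
  have hvol1 : (volume (Ioo (0:ℝ) 1)).toReal = 1 := by simp [Real.volume_Ioo]
  have hkey : ∀ j : ℕ, j < Nn →
      ∫ y in Ioo (0:ℝ) 1, |G ((y+(j:ℝ))/(Nn:ℝ)) - c j| ≤ M j * h / 3 := by
    intro j hj
    have hGjc : ∀ y ∈ Ioo (0:ℝ) 1,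
        |G ((y+(j:ℝ))/(Nn:ℝ)) - c j| ≤ (M j * h) * ((y^2 + (1-y)^2)/2) := by
      intro y hy
      have h1 : G ((y+(j:ℝ))/(Nn:ℝ)) - c j
          = ∫ t in Ioo (0:ℝ) 1, (G ((y+(j:ℝ))/(Nn:ℝ)) - G ((t+(j:ℝ))/(Nn:ℝ))) := by
        rw [integral_sub (integrable_const _) (hGjIntOn j), setIntegral_const, measureReal_def, hvol1, one_smul,
          hcdef]
      rw [h1]
      calc |∫ t in Ioo (0:ℝ) 1, (G ((y+(j:ℝ))/(Nn:ℝ)) - G ((t+(j:ℝ))/(Nn:ℝ)))|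
          ≤ ∫ t in Ioo (0:ℝ) 1, |G ((y+(j:ℝ))/(Nn:ℝ)) - G ((t+(j:ℝ))/(Nn:ℝ))| := by
            simpa using norm_integral_le_integral_norm
              (μ := volume.restrict (Ioo (0:ℝ) 1))
              (fun t => G ((y+(j:ℝ))/(Nn:ℝ)) - G ((t+(j:ℝ))/(Nn:ℝ)))
        _ ≤ ∫ t in Ioo (0:ℝ) 1, (M j * h) * |y - t| := by
            apply setIntegral_mono_on
              (((integrable_const _).sub (hGjIntOn j)).abs)
              (((continuous_const.mul
                ((continuous_const.sub continuous_id).abs)).integrableOn_Icc).mono_set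
                Ioo_subset_Icc_self)
              measurableSet_Ioo
            intro t ht
            exact hlipj j hj y hy t ht
        _ = (M j * h) * ((y^2 + (1-y)^2)/2) := by
            rw [integral_const_mul, abs_int_aux y ⟨hy.1.le, hy.2.le⟩]
    calc ∫ y in Ioo (0:ℝ) 1, |G ((y+(j:ℝ))/(Nn:ℝ)) - c j|
        ≤ ∫ y in Ioo (0:ℝ) 1, (M j * h) * ((y^2 + (1-y)^2)/2) := by
          apply setIntegral_mono_on
            (((hGjIntOn j).sub (integrable_const _)).abs)
            ((continuous_const.mul (by fun_prop : Continuous fun y : ℝ => (y^2+(1-y)^2)/2)).integrableOn_Icc.mono_set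
              Ioo_subset_Icc_self)
            measurableSet_Ioo
          exact hGjc
      _ = (M j * h) * (1/3) := by rw [integral_const_mul, poly_int]
      _ = M j * h / 3 := by ring

  have hsumM : ∀ s : Finset ℕ,
      (∑ j ∈ s, sSup ((fun y => |g' y|) '' Ioo ((j:ℝ)/(Nn:ℝ)) (((j:ℝ)+1)/(Nn:ℝ))))
        = ∑ j ∈ s, M j :=
    fun s => Finset.sum_congr rfl fun j _ => by simp only [hMdef]
  -- main bound for an arbitrary measurable set
  have hmain : ∀ A : Set ℝ, MeasurableSet A →
      |((Measure.map (fun ω => (T q)^[n] (X ω)) ℙ) A).toReal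
          - ((volume.restrict (Ico (0:ℝ) 1)) A).toReal|
        ≤ 1/2 * D + 1/6 * (h * h) * ∑ j ∈ Finset.range Nn, M j := by
    intro A hA
    set A' : Set ℝ := A ∩ Ico 0 1 with hA'def
    have hA'm : MeasurableSet A' := hA.inter measurableSet_Ico
    set A'' : Set ℝ := A ∩ Ioo 0 1 with hA''def
    have hA''m : MeasurableSet A'' := hA.inter measurableSet_Ioo
    have hA''sub : A'' ⊆ Ioo (0:ℝ) 1 := inter_subset_right
    have hA'ae : ∀ v : ℝ → ℝ, ∫ x in A', v x = ∫ x in A'', v x := by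
      intro v
      apply setIntegral_congr_set
      rw [MeasureTheory.ae_eq_set]
      constructor
      · apply measure_mono_null (show A' \ A'' ⊆ ({0} : Set ℝ) from ?_) Real.volume_singleton
        intro x hx
        obtain ⟨⟨hxA, hx0, hx1⟩, hnot⟩ := hx
        have hne : ¬ (0 < x ∧ x < 1) := fun hcon => hnot ⟨hxA, hcon⟩
        have hx00 : x = 0 := by
          by_contra hxne
          exact hne ⟨lt_of_le_of_ne hx0 (Ne.symm hxne), hx1⟩
        simp [hx00]
      · have hempty : A'' \ A' = ∅ :=
          diff_eq_empty.mpr (inter_subset_inter_right _ Ioo_subset_Ico_self)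
        simp [hempty]
    have hφpre : (fun x => Int.fract ((Nn:ℝ) * x)) ⁻¹' A
        = (fun x => Int.fract ((Nn:ℝ) * x)) ⁻¹' A' := by
      ext x
      simp only [mem_preimage, hA'def, mem_inter_iff, mem_Ico]
      exact ⟨fun hx => ⟨hx, Int.fract_nonneg _, Int.fract_lt_one _⟩, fun hx => hx.1⟩
    have hPval : ((Measure.map (fun ω => (T q)^[n] (X ω)) ℙ) A).toReal
        = ∑ j ∈ Finset.range Nn, h * ∫ y in A'', f ((y+(j:ℝ))/(Nn:ℝ)) := by
      rw [hmap, Measure.map_apply hφmeas hA, hφpre,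
        withDensity_apply _ (hφmeas hA'm),
        ← ofReal_integral_eq_lintegral_ofReal (hfint.restrict)
          (ae_of_all _ hf_nonneg),
        ENNReal.toReal_ofReal (setIntegral_nonneg (hφmeas hA'm) (fun x _ => hf_nonneg x)),
        unfold_integral Nn hNn0 f hfint hf_supp A' hA'm inter_subset_right]
      rw [hh]
      exact Finset.sum_congr rfl fun j _ => by rw [hA'ae]
    have hμval : ((volume.restrict (Ico (0:ℝ) 1)) A).toReal = ∫ y in A'', (1:ℝ) := by
      rw [Measure.restrict_apply hA, ← hA'def, ← hA'ae (fun _ => (1:ℝ)),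
        setIntegral_const, smul_eq_mul, mul_one, measureReal_def]
    have hintf'' : ∀ j:ℕ, IntegrableOn (fun y:ℝ => f ((y+(j:ℝ))/(Nn:ℝ))) A'' :=
      fun j => (hfjIntOn j).mono_set hA''sub
    have hintG'' : ∀ j:ℕ, IntegrableOn (fun y:ℝ => G ((y+(j:ℝ))/(Nn:ℝ))) A'' :=
      fun j => (hGjIntOn j).mono_set hA''sub
    have hconstOn : ∀ cc : ℝ, IntegrableOn (fun _ : ℝ => cc) (Ioo (0:ℝ) 1) volume :=
      fun cc => integrable_const cc
    have hconst'' : ∀ cc : ℝ, IntegrableOn (fun _ : ℝ => cc) A'' volume :=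
      fun cc => (hconstOn cc).mono_set hA''sub
    have hintfG : ∀ j : ℕ, IntegrableOn
        (fun y : ℝ => h * (f ((y+(j:ℝ))/(Nn:ℝ)) - G ((y+(j:ℝ))/(Nn:ℝ)))) (Ioo (0:ℝ) 1) :=
      fun j => ((hfjIntOn j).sub (hGjIntOn j)).const_mul h
    have hintGc : ∀ j : ℕ, IntegrableOn
        (fun y : ℝ => h * (G ((y+(j:ℝ))/(Nn:ℝ)) - c j)) (Ioo (0:ℝ) 1) :=
      fun j => ((hGjIntOn j).sub (hconstOn (c j))).const_mul h
    have hintfG'' : ∀ j : ℕ, IntegrableOn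
        (fun y : ℝ => h * (f ((y+(j:ℝ))/(Nn:ℝ)) - G ((y+(j:ℝ))/(Nn:ℝ)))) A'' :=
      fun j => IntegrableOn.mono_set (hintfG j) hA''sub
    have hintGc'' : ∀ j : ℕ, IntegrableOn
        (fun y : ℝ => h * (G ((y+(j:ℝ))/(Nn:ℝ)) - c j)) A'' :=
      fun j => IntegrableOn.mono_set (hintGc j) hA''sub
    have habsfG : ∀ j : ℕ, IntegrableOn
        (fun y : ℝ => h * |f ((y+(j:ℝ))/(Nn:ℝ)) - G ((y+(j:ℝ))/(Nn:ℝ))|) (Ioo (0:ℝ) 1) :=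
      fun j => (((hfjIntOn j).sub (hGjIntOn j)).abs).const_mul h
    have habsGc : ∀ j : ℕ, IntegrableOn
        (fun y : ℝ => h * |G ((y+(j:ℝ))/(Nn:ℝ)) - c j|) (Ioo (0:ℝ) 1) :=
      fun j => (((hGjIntOn j).sub (hconstOn (c j))).abs).const_mul h
    set wf : ℝ → ℝ := fun y => ∑ j ∈ Finset.range Nn,
      h * (f ((y+(j:ℝ))/(Nn:ℝ)) - G ((y+(j:ℝ))/(Nn:ℝ))) with hwfdef
    set wG : ℝ → ℝ := fun y => ∑ j ∈ Finset.range Nn,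
      h * (G ((y+(j:ℝ))/(Nn:ℝ)) - c j) with hwGdef
    have hwfOn : ∀ (B : Set ℝ), B ⊆ Ioo (0:ℝ) 1 → IntegrableOn wf B := by
      intro B hB
      rw [hwfdef]
      apply integrable_finset_sum
      intro j _
      exact IntegrableOn.mono_set (hintfG j) hB
    have hwGOn : ∀ (B : Set ℝ), B ⊆ Ioo (0:ℝ) 1 → IntegrableOn wG B := by
      intro B hB
      rw [hwGdef]
      apply integrable_finset_sum
      intro j _
      exact IntegrableOn.mono_set (hintGc j) hB
    have hIf0 : ∫ y in Ioo (0:ℝ) 1, wf y = 0 := by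
      rw [hwfdef, integral_finset_sum _ (fun j _ => hintfG j)]
      have hterm : ∀ j ∈ Finset.range Nn,
          (∫ y in Ioo (0:ℝ) 1, h * (f ((y+(j:ℝ))/(Nn:ℝ)) - G ((y+(j:ℝ))/(Nn:ℝ))))
          = h * (∫ y in Ioo (0:ℝ) 1, f ((y+(j:ℝ))/(Nn:ℝ)))
            - h * (∫ y in Ioo (0:ℝ) 1, G ((y+(j:ℝ))/(Nn:ℝ))) := by
        intro j _
        rw [integral_const_mul, integral_sub (hfjIntOn j) (hGjIntOn j), mul_sub]
      rw [Finset.sum_congr rfl hterm, Finset.sum_sub_distrib, hsumf]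
      have h2 : ∑ j ∈ Finset.range Nn, h * ∫ y in Ioo (0:ℝ) 1, G ((y+(j:ℝ))/(Nn:ℝ))
          = ∑ j ∈ Finset.range Nn, h * c j :=
        Finset.sum_congr rfl fun j _ => by simp only [hcdef]
      rw [h2, hsumc]
      ring
    have hIG0 : ∫ y in Ioo (0:ℝ) 1, wG y = 0 := by
      rw [hwGdef, integral_finset_sum _ (fun j _ => hintGc j)]
      have hterm : ∀ j ∈ Finset.range Nn,
          (∫ y in Ioo (0:ℝ) 1, h * (G ((y+(j:ℝ))/(Nn:ℝ)) - c j))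
          = h * (∫ y in Ioo (0:ℝ) 1, G ((y+(j:ℝ))/(Nn:ℝ))) - h * c j := by
        intro j _
        rw [integral_const_mul, integral_sub (hGjIntOn j) (hconstOn (c j)),
          setIntegral_const, measureReal_def, hvol1, one_smul, mul_sub]
      rw [Finset.sum_congr rfl hterm, Finset.sum_sub_distrib, hsumc]
      norm_num
    have hconstint : ∀ cc : ℝ, ∫ y in A'', (cc:ℝ) = cc * ∫ y in A'', (1:ℝ) := by
      intro cc
      rw [setIntegral_const, setIntegral_const, smul_eq_mul, smul_eq_mul]
      ring
    have hdecomp : (∑ j ∈ Finset.range Nn, h * ∫ y in A'', f ((y+(j:ℝ))/(Nn:ℝ)))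
          - ∫ y in A'', (1:ℝ)
        = (∫ y in A'', wf y) + ∫ y in A'', wG y := by
      have e1 : ∫ y in A'', wf y
          = (∑ j ∈ Finset.range Nn, h * ∫ y in A'', f ((y+(j:ℝ))/(Nn:ℝ)))
            - ∑ j ∈ Finset.range Nn, h * ∫ y in A'', G ((y+(j:ℝ))/(Nn:ℝ)) := by
        rw [hwfdef, integral_finset_sum _ (fun j _ => hintfG'' j)]
        have hterm : ∀ j ∈ Finset.range Nn,
            (∫ y in A'', h * (f ((y+(j:ℝ))/(Nn:ℝ)) - G ((y+(j:ℝ))/(Nn:ℝ))))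
            = h * (∫ y in A'', f ((y+(j:ℝ))/(Nn:ℝ)))
              - h * (∫ y in A'', G ((y+(j:ℝ))/(Nn:ℝ))) := by
          intro j _
          rw [integral_const_mul, integral_sub (hintf'' j) (hintG'' j), mul_sub]
        rw [Finset.sum_congr rfl hterm, Finset.sum_sub_distrib]
      have e2 : ∫ y in A'', wG y
          = (∑ j ∈ Finset.range Nn, h * ∫ y in A'', G ((y+(j:ℝ))/(Nn:ℝ)))
            - (∑ j ∈ Finset.range Nn, h * c j) * ∫ y in A'', (1:ℝ) := by
        rw [hwGdef, integral_finset_sum _ (fun j _ => hintGc'' j)]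
        have hterm : ∀ j ∈ Finset.range Nn,
            (∫ y in A'', h * (G ((y+(j:ℝ))/(Nn:ℝ)) - c j))
            = h * (∫ y in A'', G ((y+(j:ℝ))/(Nn:ℝ)))
              - (h * c j) * ∫ y in A'', (1:ℝ) := by
          intro j _
          rw [integral_const_mul, integral_sub (hintG'' j) (hconst'' (c j)), hconstint, mul_sub]
          ring
        rw [Finset.sum_congr rfl hterm, Finset.sum_sub_distrib, ← Finset.sum_mul]
      rw [e1, e2, hsumc]
      ring
    have habs_wf : ∀ y : ℝ, |wf y| ≤ ∑ j ∈ Finset.range Nn,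
        h * |f ((y+(j:ℝ))/(Nn:ℝ)) - G ((y+(j:ℝ))/(Nn:ℝ))| := by
      intro y
      simp only [hwfdef]
      calc |∑ j ∈ Finset.range Nn, h * (f ((y+(j:ℝ))/(Nn:ℝ)) - G ((y+(j:ℝ))/(Nn:ℝ)))|
          ≤ ∑ j ∈ Finset.range Nn, |h * (f ((y+(j:ℝ))/(Nn:ℝ)) - G ((y+(j:ℝ))/(Nn:ℝ)))| :=
            Finset.abs_sum_le_sum_abs _ _
        _ = ∑ j ∈ Finset.range Nn, h * |f ((y+(j:ℝ))/(Nn:ℝ)) - G ((y+(j:ℝ))/(Nn:ℝ))| :=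
            Finset.sum_congr rfl fun j _ => by rw [abs_mul, abs_of_pos hhpos]
    have habs_wG : ∀ y : ℝ, |wG y| ≤ ∑ j ∈ Finset.range Nn,
        h * |G ((y+(j:ℝ))/(Nn:ℝ)) - c j| := by
      intro y
      simp only [hwGdef]
      calc |∑ j ∈ Finset.range Nn, h * (G ((y+(j:ℝ))/(Nn:ℝ)) - c j)|
          ≤ ∑ j ∈ Finset.range Nn, |h * (G ((y+(j:ℝ))/(Nn:ℝ)) - c j)| :=
            Finset.abs_sum_le_sum_abs _ _
        _ = ∑ j ∈ Finset.range Nn, h * |G ((y+(j:ℝ))/(Nn:ℝ)) - c j| :=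
            Finset.sum_congr rfl fun j _ => by rw [abs_mul, abs_of_pos hhpos]
    have hwfL1 : ∫ y in Ioo (0:ℝ) 1, |wf y| ≤ D := by
      calc ∫ y in Ioo (0:ℝ) 1, |wf y|
          ≤ ∫ y in Ioo (0:ℝ) 1, (∑ j ∈ Finset.range Nn,
              h * |f ((y+(j:ℝ))/(Nn:ℝ)) - G ((y+(j:ℝ))/(Nn:ℝ))|) := by
            apply integral_mono ((hwfOn _ subset_rfl).abs)
              (integrable_finset_sum _ fun j _ => habsfG j)
            exact habs_wf
        _ = ∑ j ∈ Finset.range Nn,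
              h * ∫ y in Ioo (0:ℝ) 1, |f ((y+(j:ℝ))/(Nn:ℝ)) - G ((y+(j:ℝ))/(Nn:ℝ))| := by
            rw [integral_finset_sum _ fun j _ => habsfG j]
            exact Finset.sum_congr rfl fun j _ => integral_const_mul _ _
        _ = D := hsumfG
    have hwGL1 : ∫ y in Ioo (0:ℝ) 1, |wG y| ≤ (h * h / 3) * ∑ j ∈ Finset.range Nn, M j := by
      calc ∫ y in Ioo (0:ℝ) 1, |wG y|
          ≤ ∫ y in Ioo (0:ℝ) 1, (∑ j ∈ Finset.range Nn,
              h * |G ((y+(j:ℝ))/(Nn:ℝ)) - c j|) := by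
            apply integral_mono ((hwGOn _ subset_rfl).abs)
              (integrable_finset_sum _ fun j _ => habsGc j)
            exact habs_wG
        _ = ∑ j ∈ Finset.range Nn,
              h * ∫ y in Ioo (0:ℝ) 1, |G ((y+(j:ℝ))/(Nn:ℝ)) - c j| := by
            rw [integral_finset_sum _ fun j _ => habsGc j]
            exact Finset.sum_congr rfl fun j _ => integral_const_mul _ _
        _ ≤ ∑ j ∈ Finset.range Nn, h * (M j * h / 3) :=
            Finset.sum_le_sum fun j hj => mul_le_mul_of_nonneg_left
              (hkey j (Finset.mem_range.mp hj)) hhpos.le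
        _ = (h * h / 3) * ∑ j ∈ Finset.range Nn, M j := by
            rw [Finset.mul_sum]
            exact Finset.sum_congr rfl fun j _ => by ring
    rw [hPval, hμval]
    calc |(∑ j ∈ Finset.range Nn, h * ∫ y in A'', f ((y+(j:ℝ))/(Nn:ℝ))) - ∫ y in A'', (1:ℝ)|
        = |(∫ y in A'', wf y) + ∫ y in A'', wG y| := by rw [hdecomp]
      _ ≤ |∫ y in A'', wf y| + |∫ y in A'', wG y| := abs_add_le _ _
      _ ≤ 1/2 * (∫ y in Ioo (0:ℝ) 1, |wf y|) + 1/2 * (∫ y in Ioo (0:ℝ) 1, |wG y|) :=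
          add_le_add (half_trick hA''m hA''sub (hwfOn _ subset_rfl) hIf0)
            (half_trick hA''m hA''sub (hwGOn _ subset_rfl) hIG0)
      _ ≤ 1/2 * D + 1/2 * ((h * h / 3) * ∑ j ∈ Finset.range Nn, M j) :=
          add_le_add (by linarith [hwfL1]) (by linarith [hwGL1])
      _ = 1/2 * D + 1/6 * (h * h) * ∑ j ∈ Finset.range Nn, M j := by ring
  constructor
  · haveI : Nonempty {A : Set ℝ // MeasurableSet A} := ⟨⟨∅, MeasurableSet.empty⟩⟩
    unfold dTV
    apply ciSup_le
    rintro ⟨A, hA⟩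
    refine le_trans (hmain A hA) ?_
    rw [hsumM]
  · rw [hsumM]
    refine add_le_add le_rfl ?_
    have hsum_le : (∑ j ∈ Finset.range Nn, M j) ≤ (Nn:ℝ) * S := by
      calc (∑ j ∈ Finset.range Nn, M j) ≤ ∑ _j ∈ Finset.range Nn, S :=
            Finset.sum_le_sum fun j hj => hMS j (Finset.mem_range.mp hj)
        _ = (Nn:ℝ) * S := by
            rw [Finset.sum_const, Finset.card_range, nsmul_eq_mul]
    calc 1/6 * (h * h) * ∑ j ∈ Finset.range Nn, M j
        ≤ 1/6 * (h * h) * ((Nn:ℝ) * S) := by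
          apply mul_le_mul_of_nonneg_left hsum_le (by positivity)
      _ = 1/6 * h * S := by
          rw [hh]
          field_simp
end

section
/- Let q ≥ 2 and k ≥ 1 be integers and let X be a random variable with values in the unit cube [0,1)^k whose law is absolutely continuous with joint density f concentrated on (0,1)^k. Then d_TV(P_n, μ) → 0 as n → ∞, where P_n is the law of T^n(X) with T applied coordinatewise and μ is Lebesgue measure on [0,1)^k. -/
open MeasureTheory Set Filter

/-- The base-`q` map applied coordinatewise on `[0,1)^k`. -/
noncomputable def Tk (q k : ℕ) : (Fin k → ℝ) → (Fin k → ℝ) :=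
  fun x i => Int.fract ((q : ℝ) * x i)

/-- Total variation distance between measures on `ℝ^k`. -/
noncomputable def dTVk (k : ℕ) (ν₁ ν₂ : Measure (Fin k → ℝ)) : ℝ :=
  ⨆ A : {A : Set (Fin k → ℝ) // MeasurableSet A}, |(ν₁ A.1).toReal - (ν₂ A.1).toReal|

namespace Stmt18Aux

/-- The unit cube `[0,1)^k`. -/
def cube (k : ℕ) : Set (Fin k → ℝ) := {y | ∀ i, y i ∈ Set.Ico (0:ℝ) 1}

/-- The `q`-adic box of level indexed by `j`. -/
def box (k N : ℕ) (j : Fin k → Fin N) : Set (Fin k → ℝ) :=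
  {y | ∀ i, y i ∈ Set.Ico ((j i : ℝ)/N) (((j i : ℝ)+1)/N)}

/-- The coordinatewise map `x ↦ fract (N x)`. -/
noncomputable def Sm (k N : ℕ) : (Fin k → ℝ) → (Fin k → ℝ) :=
  fun x i => Int.fract ((N:ℝ) * x i)

lemma cube_eq_pi (k : ℕ) : cube k = Set.pi Set.univ (fun _ : Fin k => Set.Ico (0:ℝ) 1) := by
  ext x; simp [cube, Set.mem_pi]

lemma box_eq_pi (k N : ℕ) (j : Fin k → Fin N) :
    box k N j = Set.pi Set.univ (fun i => Set.Ico ((j i : ℝ)/N) (((j i : ℝ)+1)/N)) := by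
  ext x; simp [box, Set.mem_pi]

lemma measurableSet_cube (k : ℕ) : MeasurableSet (cube k) := by
  rw [cube_eq_pi]; exact MeasurableSet.univ_pi (fun i => measurableSet_Ico)

lemma measurableSet_box (k N : ℕ) (j : Fin k → Fin N) : MeasurableSet (box k N j) := by
  rw [box_eq_pi]; exact MeasurableSet.univ_pi (fun i => measurableSet_Ico)

lemma volume_cube (k : ℕ) : volume (cube k) = 1 := by
  rw [cube_eq_pi, volume_pi_pi]
  simp [Real.volume_Ico]

lemma measurable_Sm (k N : ℕ) : Measurable (Sm k N) :=
  measurable_pi_lambda _ fun i => measurable_fract.comp (measurable_const.mul (measurable_pi_apply i))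

lemma Sm_mem_cube (k N : ℕ) (x : Fin k → ℝ) : Sm k N x ∈ cube k :=
  fun i => ⟨Int.fract_nonneg _, Int.fract_lt_one _⟩

lemma box_subset_cube {k N : ℕ} (hN : 0 < N) (j : Fin k → Fin N) : box k N j ⊆ cube k := by
  intro x hx i
  have h := hx i
  have hNpos : (0:ℝ) < N := by exact_mod_cast hN
  constructor
  · exact le_trans (by positivity) h.1
  · refine lt_of_lt_of_le h.2 ?_
    rw [div_le_one hNpos]
    have : (j i : ℝ) + 1 ≤ N := by exact_mod_cast (j i).2
    exact this

/-- On `box j`, the membership is equivalent to an affine condition. -/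
lemma key_seteq {k N : ℕ} (hN : 0 < N) (j : Fin k → Fin N) (B : Set (Fin k → ℝ)) :
    Sm k N ⁻¹' B ∩ box k N j
      = (fun x => (N:ℝ) • x - (fun i => (j i : ℝ))) ⁻¹' (B ∩ cube k) := by
  have hNpos : (0:ℝ) < N := by exact_mod_cast hN
  ext x
  have heq : ((N:ℝ) • x - fun i => (j i:ℝ)) = fun i => (N:ℝ) * x i - (j i : ℝ) := by
    funext i; simp [Pi.smul_apply, smul_eq_mul]
  have hbox : x ∈ box k N j ↔ (fun i => (N:ℝ) * x i - (j i : ℝ)) ∈ cube k := by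
    constructor
    · intro hx i
      have h1 := (div_le_iff₀ hNpos).1 (hx i).1
      have h2 := (lt_div_iff₀ hNpos).1 (hx i).2
      refine ⟨?_, ?_⟩
      · show (0:ℝ) ≤ (N:ℝ) * x i - (j i : ℝ); linarith
      · show ((N:ℝ) * x i - (j i : ℝ)) < 1; linarith
    · intro hx i
      have h : (0:ℝ) ≤ (N:ℝ) * x i - (j i : ℝ) ∧ ((N:ℝ) * x i - (j i : ℝ)) < 1 := hx i
      refine ⟨?_, ?_⟩
      · rw [div_le_iff₀ hNpos]; linarith [h.1]
      · rw [lt_div_iff₀ hNpos]; linarith [h.2]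
  have hfract : x ∈ box k N j → Sm k N x = fun i => (N:ℝ) * x i - (j i : ℝ) := by
    intro hx
    funext i
    have h := hbox.1 hx i
    have h2 : Int.fract ((N:ℝ) * x i - ((j i : ℤ) : ℝ)) = (N:ℝ) * x i - ((j i : ℕ) : ℝ) := by
      rw [Int.fract_eq_self.2]
      · push_cast; ring
      · push_cast
        exact ⟨h.1, h.2⟩
    rw [Sm, ← Int.fract_sub_intCast ((N:ℝ) * x i) ((j i : ℤ))]
    rw [h2]
  constructor
  · rintro ⟨hB, hbx⟩
    refine ⟨?_, ?_⟩
    · show ((N:ℝ) • x - fun i => (j i:ℝ)) ∈ B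
      rw [heq, ← hfract hbx]; exact hB
    · show ((N:ℝ) • x - fun i => (j i:ℝ)) ∈ cube k
      rw [heq]; exact hbox.1 hbx
  · rintro ⟨hB, hcube⟩
    simp only [] at hB hcube
    rw [heq] at hB hcube
    have hbx : x ∈ box k N j := hbox.2 hcube
    refine ⟨?_, hbx⟩
    show Sm k N x ∈ B
    rw [hfract hbx]; exact hB

/-- Volume of an affine preimage. -/
lemma volume_affine_preimage {k N : ℕ} (hN : 0 < N) (j : Fin k → Fin N)
    (W : Set (Fin k → ℝ)) :
    volume ((fun x => (N:ℝ) • x - (fun i => (j i : ℝ))) ⁻¹' W)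
      = (ENNReal.ofReal ((N:ℝ)^k))⁻¹ * volume W := by
  have hNpos : (0:ℝ) < N := by exact_mod_cast hN
  have hcomp : (fun x : Fin k → ℝ => (N:ℝ) • x - (fun i => (j i : ℝ)))
      = (fun y : Fin k → ℝ => y + (-(fun i => (j i : ℝ)))) ∘ (fun x => (N:ℝ) • x) := by
    funext x; simp [sub_eq_add_neg]
  rw [hcomp, Set.preimage_comp]
  rw [Measure.addHaar_preimage_smul volume (ne_of_gt hNpos)]
  rw [measure_preimage_add_right]
  congr 1
  rw [Module.finrank_fin_fun]
  rw [abs_of_nonneg (by positivity)]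
  rw [ENNReal.ofReal_inv_of_pos (by positivity)]

/-- The key measure computation: each box contributes proportionally. -/
lemma key_vol {k N : ℕ} (hN : 0 < N) (j : Fin k → Fin N) (B : Set (Fin k → ℝ)) :
    volume (Sm k N ⁻¹' B ∩ box k N j) = (ENNReal.ofReal ((N:ℝ)^k))⁻¹ * volume (B ∩ cube k) := by
  rw [key_seteq hN j B, volume_affine_preimage hN]

lemma volume_box {k N : ℕ} (hN : 0 < N) (j : Fin k → Fin N) :
    volume (box k N j) = (ENNReal.ofReal ((N:ℝ)^k))⁻¹ := by
  have := key_vol hN j Set.univ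
  simpa [volume_cube] using this


/-- Unique box containing a point of the cube. -/
lemma exists_unique_box {k N : ℕ} (hN : 0 < N) {x : Fin k → ℝ} (hx : x ∈ cube k) :
    ∃ j : Fin k → Fin N, x ∈ box k N j ∧ ∀ j' : Fin k → Fin N, x ∈ box k N j' → j' = j := by
  have hNpos : (0:ℝ) < N := by exact_mod_cast hN
  have hfl : ∀ i, 0 ≤ ⌊(N:ℝ) * x i⌋ ∧ ⌊(N:ℝ) * x i⌋ < N := by
    intro i
    constructor
    · exact Int.floor_nonneg.2 (by nlinarith [(hx i).1])
    · have : (N:ℝ) * x i < N := by nlinarith [(hx i).2, (hx i).1]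
      exact_mod_cast Int.floor_lt.2 (by exact_mod_cast this)
  refine ⟨fun i => ⟨(⌊(N:ℝ) * x i⌋).toNat, ?_⟩, ?_, ?_⟩
  · have := (hfl i).2
    have h0 := (hfl i).1
    omega
  · intro i
    have h0 := (hfl i).1
    have hcast : ((((⌊(N:ℝ) * x i⌋).toNat : ℕ)) : ℝ) = (⌊(N:ℝ) * x i⌋ : ℝ) := by
      exact_mod_cast Int.toNat_of_nonneg h0
    constructor
    · show ((((⌊(N:ℝ) * x i⌋).toNat : ℕ)) : ℝ) / N ≤ x i
      rw [hcast, div_le_iff₀ hNpos]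
      have := Int.floor_le ((N:ℝ) * x i)
      linarith
    · show x i < (((((⌊(N:ℝ) * x i⌋).toNat : ℕ)) : ℝ) + 1) / N
      rw [lt_div_iff₀ hNpos, hcast]
      have := Int.lt_floor_add_one ((N:ℝ) * x i)
      linarith
  · intro j' hj'
    funext i
    have h1 := (div_le_iff₀ hNpos).1 (hj' i).1
    have h2 := (lt_div_iff₀ hNpos).1 (hj' i).2
    have : ⌊(N:ℝ) * x i⌋ = (j' i : ℤ) := by
      rw [Int.floor_eq_iff]
      constructor
      · push_cast; linarith
      · push_cast; linarith
    apply Fin.ext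
    show (j' i : ℕ) = (⌊(N:ℝ) * x i⌋).toNat
    omega

/-- The step function associated to coefficients `c`. -/
noncomputable def stepFun (k N : ℕ) (c : (Fin k → Fin N) → ℝ) : (Fin k → ℝ) → ℝ :=
  fun x => ∑ j : Fin k → Fin N, (box k N j).indicator (fun _ => c j) x

lemma stepFun_nonneg {k N : ℕ} {c : (Fin k → Fin N) → ℝ} (hc : ∀ j, 0 ≤ c j) (x : Fin k → ℝ) :
    0 ≤ stepFun k N c x :=
  Finset.sum_nonneg fun j _ => Set.indicator_nonneg (fun _ _ => hc j) x

lemma stepFun_measurable {k N : ℕ} (c : (Fin k → Fin N) → ℝ) : Measurable (stepFun k N c) :=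
  Finset.measurable_sum _ fun j _ => measurable_const.indicator (measurableSet_box k N j)

lemma stepFun_eq_zero {k N : ℕ} (hN : 0 < N) {c : (Fin k → Fin N) → ℝ} {x : Fin k → ℝ}
    (hx : x ∉ cube k) : stepFun k N c x = 0 := by
  apply Finset.sum_eq_zero
  intro j _
  apply Set.indicator_of_notMem
  exact fun h => hx (box_subset_cube hN j h)

lemma stepFun_eq_of_mem {k N : ℕ} (hN : 0 < N) {c : (Fin k → Fin N) → ℝ} {x : Fin k → ℝ}
    (hx : x ∈ cube k) {j : Fin k → Fin N} (hj : x ∈ box k N j)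
    (huniq : ∀ j' : Fin k → Fin N, x ∈ box k N j' → j' = j) :
    stepFun k N c x = c j := by
  rw [stepFun, Finset.sum_eq_single_of_mem j (Finset.mem_univ j)]
  · exact Set.indicator_of_mem hj _
  · intro j' _ hne
    apply Set.indicator_of_notMem
    exact fun h => hne (huniq j' h)

/-- Set-lintegral of the (ENNReal) step function. -/
lemma setLIntegral_stepFun {k N : ℕ} {c : (Fin k → Fin N) → ℝ} (hc : ∀ j, 0 ≤ c j)
    {U : Set (Fin k → ℝ)} (hU : MeasurableSet U) :
    ∫⁻ x in U, ENNReal.ofReal (stepFun k N c x)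
      = ∑ j : Fin k → Fin N, ENNReal.ofReal (c j) * volume (box k N j ∩ U) := by
  have hpt : ∀ x, ENNReal.ofReal (stepFun k N c x)
      = ∑ j : Fin k → Fin N, (box k N j).indicator (fun _ => ENNReal.ofReal (c j)) x := by
    intro x
    rw [stepFun, ENNReal.ofReal_sum_of_nonneg (fun j _ => Set.indicator_nonneg (fun _ _ => hc j) x)]
    congr 1
    funext j
    by_cases h : x ∈ box k N j
    · rw [Set.indicator_of_mem h, Set.indicator_of_mem h]
    · rw [Set.indicator_of_notMem h, Set.indicator_of_notMem h, ENNReal.ofReal_zero]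
  simp only [hpt]
  rw [lintegral_finset_sum]
  · congr 1
    funext j
    rw [lintegral_indicator_const (measurableSet_box k N j)]
    rw [Measure.restrict_apply (measurableSet_box k N j)]
  · exact fun j _ => measurable_const.indicator (measurableSet_box k N j)

/-- The pushforward of a step-density measure under `Sm` is uniform on the cube. -/
lemma map_step {k N : ℕ} (hN : 0 < N) {c : (Fin k → Fin N) → ℝ} (hc : ∀ j, 0 ≤ c j) :
    Measure.map (Sm k N) (volume.withDensity fun x => ENNReal.ofReal (stepFun k N c x))
      = (∫⁻ x, ENNReal.ofReal (stepFun k N c x)) • volume.restrict (cube k) := by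
  ext B hB
  rw [Measure.map_apply (measurable_Sm k N) hB]
  rw [withDensity_apply _ ((measurable_Sm k N) hB)]
  rw [setLIntegral_stepFun hc ((measurable_Sm k N) hB)]
  have hmass : ∫⁻ x, ENNReal.ofReal (stepFun k N c x)
      = ∑ j : Fin k → Fin N, ENNReal.ofReal (c j) * (ENNReal.ofReal ((N:ℝ)^k))⁻¹ := by
    rw [← setLIntegral_univ, setLIntegral_stepFun hc MeasurableSet.univ]
    congr 1
    funext j
    rw [Set.inter_univ, volume_box hN]
  rw [Measure.smul_apply, smul_eq_mul, Measure.restrict_apply hB, hmass, Finset.sum_mul]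
  congr 1
  funext j
  rw [Set.inter_comm (box k N j), key_vol hN j B]
  ring


/-- The all-ones step function has density equal to the indicator of the cube. -/
lemma step_one {k N : ℕ} (hN : 0 < N) :
    (fun x => ENNReal.ofReal (stepFun k N (fun _ => (1:ℝ)) x))
      = (cube k).indicator (1 : (Fin k → ℝ) → ENNReal) := by
  funext x
  by_cases hx : x ∈ cube k
  · obtain ⟨j, hj, huniq⟩ := exists_unique_box hN hx
    rw [stepFun_eq_of_mem hN hx hj huniq, Set.indicator_of_mem hx]
    simp
  · rw [stepFun_eq_zero hN hx, Set.indicator_of_notMem hx]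
    simp

lemma map_Sm_restrict_cube {k N : ℕ} (hN : 0 < N) :
    Measure.map (Sm k N) (volume.restrict (cube k)) = volume.restrict (cube k) := by
  have h1 : volume.restrict (cube k)
      = volume.withDensity fun x => ENNReal.ofReal (stepFun k N (fun _ => (1:ℝ)) x) := by
    rw [step_one hN, withDensity_indicator_one (measurableSet_cube k)]
  have h2 : (∫⁻ x, ENNReal.ofReal (stepFun k N (fun _ => (1:ℝ)) x)) = 1 := by
    rw [step_one hN]
    rw [lintegral_indicator (measurableSet_cube k)]
    simp [volume_cube]
  rw [h1, map_step hN (fun _ => zero_le_one), h2, one_smul, ← h1]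

lemma measurable_Tk (q k : ℕ) : Measurable (Tk q k) := measurable_Sm k q

lemma Tk_eq_Sm (q k : ℕ) : Tk q k = Sm k q := rfl

/-- Iterates of `Tk` on the cube. -/
lemma Tk_iterate_eq {q k : ℕ} (n : ℕ) {x : Fin k → ℝ} (hx : x ∈ cube k) :
    (Tk q k)^[n] x = Sm k (q^n) x := by
  induction n with
  | zero =>
    funext i
    simp only [Function.iterate_zero, id_eq, Sm, pow_zero, Nat.cast_one, one_mul]
    exact (Int.fract_eq_self.2 ⟨(hx i).1, (hx i).2⟩).symm
  | succ n ih =>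
    rw [Function.iterate_succ_apply', ih]
    funext i
    show Int.fract ((q:ℝ) * Int.fract (((q^n : ℕ):ℝ) * x i)) = Int.fract (((q^(n+1) : ℕ):ℝ) * x i)
    have h1 : (q:ℝ) * Int.fract (((q^n : ℕ):ℝ) * x i)
        = (q:ℝ) * (((q^n : ℕ):ℝ) * x i) - ((q * ⌊((q^n : ℕ):ℝ) * x i⌋ : ℤ) : ℝ) := by
      rw [Int.fract]
      push_cast
      ring
    rw [h1, Int.fract_sub_intCast]
    congr 1
    push_cast
    ring

/-- Measures vanishing outside the cube: map of `Tk` iterate equals map of `Sm`. -/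
lemma map_Tk_iterate {q k : ℕ} (n : ℕ) (ν : Measure (Fin k → ℝ)) (hν : ν (cube k)ᶜ = 0) :
    Measure.map ((Tk q k)^[n]) ν = Measure.map (Sm k (q^n)) ν := by
  apply Measure.map_congr
  have : ∀ᵐ x ∂ν, x ∈ cube k := by
    rw [MeasureTheory.ae_iff]
    exact hν
  filter_upwards [this] with x hx
  exact Tk_iterate_eq n hx

/-- Invariance of the uniform measure under iterates of `Tk`. -/
lemma map_Tk_iterate_restrict_cube {q k : ℕ} (hq : 0 < q) (n : ℕ) :
    Measure.map ((Tk q k)^[n]) (volume.restrict (cube k)) = volume.restrict (cube k) := by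
  have hcompl : (volume.restrict (cube k)) (cube k)ᶜ = 0 := by
    rw [Measure.restrict_apply (measurableSet_cube k).compl]
    simp
  rw [map_Tk_iterate n _ hcompl]
  exact map_Sm_restrict_cube (pow_pos hq n)

end Stmt18Aux

open Stmt18Aux in
theorem stmt18
    {Ω : Type*} [MeasurableSpace Ω] (ℙ : Measure Ω) [IsProbabilityMeasure ℙ]
    (q k : ℕ) (hq : 2 ≤ q) (hk : 1 ≤ k)
    (f : (Fin k → ℝ) → ℝ) (hf_meas : Measurable f) (hf_nonneg : ∀ x, 0 ≤ f x)
    (hf_supp : ∀ x, x ∉ {y : Fin k → ℝ | ∀ i, y i ∈ Set.Ioo (0:ℝ) 1} → f x = 0)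
    (X : Ω → Fin k → ℝ) (hX : Measurable X)
    (hXrange : ∀ ω, ∀ i, X ω i ∈ Set.Ico (0:ℝ) 1)
    (hlaw : Measure.map X ℙ = volume.withDensity (fun x => ENNReal.ofReal (f x))) :
    Tendsto (fun n : ℕ =>
        dTVk k (Measure.map (fun ω => (Tk q k)^[n] (X ω)) ℙ)
          (volume.restrict {y : Fin k → ℝ | ∀ i, y i ∈ Set.Ico (0:ℝ) 1}))
      atTop (nhds 0) := by
  classical
  have hset : {y : Fin k → ℝ | ∀ i, y i ∈ Set.Ico (0:ℝ) 1} = cube k := rfl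
  rw [hset]
  have hq0 : 0 < q := by omega
  have hq1 : (1:ℝ) < q := by exact_mod_cast hq
  -- f is integrable with integral 1
  have hprob : IsProbabilityMeasure (volume.withDensity fun x => ENNReal.ofReal (f x)) := by
    rw [← hlaw]; exact Measure.isProbabilityMeasure_map hX.aemeasurable
  have hlint : ∫⁻ x, ENNReal.ofReal (f x) = 1 := by
    have h := hprob.measure_univ
    rwa [withDensity_apply _ MeasurableSet.univ, Measure.restrict_univ] at h
  have hf_int : Integrable f volume := by
    refine ⟨hf_meas.aestronglyMeasurable, ?_⟩
    rw [hasFiniteIntegral_iff_norm]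
    have hnrm : ∀ a, ENNReal.ofReal ‖f a‖ = ENNReal.ofReal (f a) := fun a => by
      rw [Real.norm_eq_abs, abs_of_nonneg (hf_nonneg a)]
    simp only [hnrm, hlint]
    exact ENNReal.one_lt_top
  have hf_integral : ∫ x, f x = 1 := by
    have h := ofReal_integral_eq_lintegral_ofReal hf_int (Filter.Eventually.of_forall hf_nonneg)
    rw [hlint] at h
    exact ENNReal.ofReal_eq_one.1 h
  -- a helper for toReal of withDensity
  have toReal_wd : ∀ (F : (Fin k → ℝ) → ℝ), Integrable F volume → (∀ x, 0 ≤ F x) →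
      ∀ (W : Set (Fin k → ℝ)), MeasurableSet W →
      ((volume.withDensity fun x => ENNReal.ofReal (F x)) W).toReal = ∫ x in W, F x := by
    intro F hFi hFnn W hW
    rw [withDensity_apply _ hW,
      ← ofReal_integral_eq_lintegral_ofReal hFi.restrict (Filter.Eventually.of_forall hFnn),
      ENNReal.toReal_ofReal (integral_nonneg hFnn)]
  rw [Metric.tendsto_atTop]
  intro ε hε
  -- continuous compactly supported approximation
  obtain ⟨h, hh_supp, hh_close, hh_cont, hh_int⟩ :=
    hf_int.exists_hasCompactSupport_integral_sub_le (by positivity : (0:ℝ) < ε/8)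
  set hplus : (Fin k → ℝ) → ℝ := fun y => max (h y) 0 with hplus_def
  set h₂ : (Fin k → ℝ) → ℝ := (cube k).indicator hplus with h₂_def
  have hplus_int : Integrable hplus volume := hh_int.pos_part
  have h₂_int : Integrable h₂ volume := hplus_int.indicator (measurableSet_cube k)
  have h₂_nonneg : ∀ x, 0 ≤ h₂ x := fun x =>
    Set.indicator_nonneg (fun y _ => le_max_right _ _) x
  have hfh₂ : ∀ x, |f x - h₂ x| ≤ |f x - h x| := by
    intro x
    by_cases hx : x ∈ cube k
    · rw [h₂_def, Set.indicator_of_mem hx]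
      rcases le_or_gt (h x) 0 with hle | hlt
      · rw [hplus_def]
        simp only [max_eq_right hle, sub_zero]
        rw [abs_of_nonneg (hf_nonneg x)]
        have h1 : f x ≤ f x - h x := by linarith
        exact le_trans h1 (le_abs_self _)
      · rw [hplus_def]; simp only [max_eq_left hlt.le]; exact le_refl _
    · have hfx : f x = 0 := by
        apply hf_supp
        intro hmem
        exact hx (fun i => ⟨(hmem i).1.le, (hmem i).2⟩)
      rw [h₂_def, Set.indicator_of_notMem hx, hfx]
      simp [abs_nonneg]
  have hfh₂_int : ∫ x, |f x - h₂ x| ≤ ε/8 := by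
    have hint1 : Integrable (fun x => |f x - h₂ x|) volume := (hf_int.sub h₂_int).abs
    have hint2 : Integrable (fun x => ‖f x - h x‖) volume := (hf_int.sub hh_int).norm
    refine le_trans (integral_mono hint1 hint2 ?_) hh_close
    intro x
    show |f x - h₂ x| ≤ ‖f x - h x‖
    rw [Real.norm_eq_abs]
    exact hfh₂ x
  -- uniform continuity
  have huc : UniformContinuous h := hh_supp.uniformContinuous_of_continuous hh_cont
  rw [Metric.uniformContinuous_iff] at huc
  obtain ⟨δ, hδ, hδ'⟩ := huc (ε/8) (by positivity)
  obtain ⟨m, hm⟩ := pow_unbounded_of_one_lt (1/δ) hq1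
  set N : ℕ := q ^ m with hN_def
  have hN : 0 < N := pow_pos hq0 m
  have hNpos : (0:ℝ) < N := by exact_mod_cast hN
  have hNδ : (1:ℝ)/N < δ := by
    rw [div_lt_iff₀ hNpos]
    rw [div_lt_iff₀ hδ] at hm
    have hNq : ((N:ℕ):ℝ) = (q:ℝ)^m := by rw [hN_def]; push_cast; ring
    nlinarith [hm, hδ]
  -- the step approximation
  set c : (Fin k → Fin N) → ℝ := fun j => ((N:ℝ)^k) * ∫ y in box k N j, h₂ y with hc_def
  have hc : ∀ j, 0 ≤ c j := fun j =>
    mul_nonneg (by positivity)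
      (setIntegral_nonneg (measurableSet_box k N j) (fun y _ => h₂_nonneg y))
  set g : (Fin k → ℝ) → ℝ := stepFun k N c with hg_def
  have hg_nonneg : ∀ x, 0 ≤ g x := stepFun_nonneg hc
  have hvolbox : ∀ j : Fin k → Fin N, volume (box k N j) < ⊤ := by
    intro j
    rw [volume_box hN]
    exact ENNReal.inv_lt_top.2 (ENNReal.ofReal_pos.2 (by positivity))
  have hvolboxR : ∀ j : Fin k → Fin N, (volume (box k N j)).toReal = ((N:ℝ)^k)⁻¹ := by
    intro j
    rw [volume_box hN, ENNReal.toReal_inv, ENNReal.toReal_ofReal (by positivity)]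
  have hg_int : Integrable g volume := by
    apply integrable_finset_sum
    intro j _
    exact (integrableOn_const (hvolbox j).ne).integrable_indicator (measurableSet_box k N j)
  -- pointwise estimate |h₂ - g| ≤ ε/8
  have hpt : ∀ x, |h₂ x - g x| ≤ ε/8 := by
    intro x
    by_cases hx : x ∈ cube k
    · obtain ⟨j, hj, huniq⟩ := exists_unique_box hN hx
      rw [hg_def, stepFun_eq_of_mem hN hx hj huniq]
      have hint2 : IntegrableOn h₂ (box k N j) volume := h₂_int.restrict
      have hconst : IntegrableOn (fun _ => h₂ x) (box k N j) volume :=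
        integrableOn_const (hvolbox j).ne
      have e1 : h₂ x - c j = ((N:ℝ)^k) * ∫ y in box k N j, (h₂ x - h₂ y) := by
        rw [integral_sub hconst hint2, integral_const, measureReal_def, Measure.restrict_apply_univ, hvolboxR j,
          smul_eq_mul, hc_def]
        have hNk : ((N:ℝ)^k) ≠ 0 := by positivity
        field_simp
      have e2 : ‖∫ y in box k N j, (h₂ x - h₂ y)‖ ≤ (ε/8) * (volume (box k N j)).toReal := by
        apply norm_setIntegral_le_of_norm_le_const (hvolbox j)
        · intro y hy
          have hdist : dist x y < δ := by
            rw [dist_pi_lt_iff hδ]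
            intro i
            rw [Real.dist_eq, abs_sub_lt_iff]
            have h1l := (hj i).1
            have h1r := (hj i).2
            have h2l := (hy i).1
            have h2r := (hy i).2
            have hdiff : ((j i : ℝ)+1)/N - (j i : ℝ)/N = 1/N := by ring
            constructor <;> linarith
          have hhd : |h x - h y| < ε/8 := by
            have := hδ' hdist
            rwa [Real.dist_eq] at this
          have hcy : y ∈ cube k := box_subset_cube hN j hy
          rw [Real.norm_eq_abs, h₂_def, Set.indicator_of_mem hx, Set.indicator_of_mem hcy,
            hplus_def]
          exact le_trans (abs_max_sub_max_le_abs _ _ _) hhd.le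
      rw [e1, abs_mul, abs_of_nonneg (by positivity : (0:ℝ) ≤ (N:ℝ)^k)]
      calc ((N:ℝ)^k) * |∫ y in box k N j, (h₂ x - h₂ y)|
          ≤ ((N:ℝ)^k) * ((ε/8) * ((N:ℝ)^k)⁻¹) := by
            apply mul_le_mul_of_nonneg_left _ (by positivity)
            rw [← Real.norm_eq_abs]
            calc ‖∫ y in box k N j, (h₂ x - h₂ y)‖
                ≤ (ε/8) * (volume (box k N j)).toReal := e2
              _ = (ε/8) * ((N:ℝ)^k)⁻¹ := by rw [hvolboxR j]
        _ = ε/8 := by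
            have hNk : ((N:ℝ)^k) ≠ 0 := by positivity
            field_simp
    · rw [hg_def, stepFun_eq_zero hN hx, h₂_def, Set.indicator_of_notMem hx]
      simp
      positivity
  have hcube_indicator_int : Integrable ((cube k).indicator (fun _ => ε/8)) volume := by
    refine (integrableOn_const ?_).integrable_indicator (measurableSet_cube k)
    rw [volume_cube]; exact ENNReal.one_ne_top
  have hh₂g_int : ∫ x, |h₂ x - g x| ≤ ε/8 := by
    have hb : ∀ x, |h₂ x - g x| ≤ (cube k).indicator (fun _ => ε/8) x := by
      intro x
      by_cases hx : x ∈ cube k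
      · rw [Set.indicator_of_mem hx]; exact hpt x
      · rw [Set.indicator_of_notMem hx, hg_def, stepFun_eq_zero hN hx, h₂_def,
          Set.indicator_of_notMem hx]
        simp
    calc ∫ x, |h₂ x - g x| ≤ ∫ x, (cube k).indicator (fun _ => ε/8) x :=
          integral_mono ((h₂_int.sub hg_int).abs) hcube_indicator_int hb
      _ = (volume (cube k)).toReal • (ε/8) := integral_indicator_const _ (measurableSet_cube k)
      _ = ε/8 := by rw [volume_cube]; simp
  have hfg : ∫ x, |f x - g x| ≤ ε/4 := by
    have hb : ∀ x, |f x - g x| ≤ |f x - h₂ x| + |h₂ x - g x| := by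
      intro x
      calc |f x - g x| = |(f x - h₂ x) + (h₂ x - g x)| := by ring_nf
        _ ≤ |f x - h₂ x| + |h₂ x - g x| := abs_add_le _ _
    calc ∫ x, |f x - g x|
        ≤ ∫ x, (|f x - h₂ x| + |h₂ x - g x|) :=
          integral_mono ((hf_int.sub hg_int).abs)
            (((hf_int.sub h₂_int).abs).add ((h₂_int.sub hg_int).abs)) hb
      _ = (∫ x, |f x - h₂ x|) + ∫ x, |h₂ x - g x| :=
          integral_add ((hf_int.sub h₂_int).abs) ((h₂_int.sub hg_int).abs)
      _ ≤ ε/8 + ε/8 := add_le_add hfh₂_int hh₂g_int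
      _ = ε/4 := by ring
  -- the total mass of the step measure
  set κ : ENNReal := ∫⁻ x, ENNReal.ofReal (g x) with hκ_def
  have hκ : κ = ENNReal.ofReal (∫ x, g x) :=
    (ofReal_integral_eq_lintegral_ofReal hg_int (Filter.Eventually.of_forall hg_nonneg)).symm
  have hg_integral : |(∫ x, g x) - 1| ≤ ε/4 := by
    rw [← hf_integral, ← integral_sub hg_int hf_int]
    calc |∫ x, (g x - f x)| ≤ ∫ x, |g x - f x| := by
          rw [← Real.norm_eq_abs]
          exact (norm_integral_le_integral_norm _).trans (le_of_eq (by simp [Real.norm_eq_abs]))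
      _ = ∫ x, |f x - g x| := by
          congr 1; funext x; rw [abs_sub_comm]
      _ ≤ ε/4 := hfg
  -- the pushforward identity for n ≥ m
  have hgsupp : (volume.withDensity fun x => ENNReal.ofReal (g x)) (cube k)ᶜ = 0 := by
    rw [withDensity_apply _ (measurableSet_cube k).compl]
    rw [setLIntegral_congr_fun (measurableSet_cube k).compl
      (fun x hx => by
        rw [hg_def, stepFun_eq_zero hN hx, ENNReal.ofReal_zero])]
    simp
  have hmap : ∀ n, m ≤ n →
      Measure.map ((Tk q k)^[n]) (volume.withDensity fun x => ENNReal.ofReal (g x))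
        = κ • volume.restrict (cube k) := by
    intro n hn
    obtain ⟨r, rfl⟩ : ∃ r, n = r + m := ⟨n - m, by omega⟩
    rw [Function.iterate_add (Tk q k) r m,
      ← Measure.map_map ((measurable_Tk q k).iterate r) ((measurable_Tk q k).iterate m),
      map_Tk_iterate m _ hgsupp, hg_def, map_step hN hc, Measure.map_smul,
      map_Tk_iterate_restrict_cube hq0 r]
  -- the law of the iterates
  have hPn : ∀ n : ℕ, Measure.map (fun ω => (Tk q k)^[n] (X ω)) ℙ
      = Measure.map ((Tk q k)^[n]) (volume.withDensity fun x => ENNReal.ofReal (f x)) := by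
    intro n
    rw [← hlaw, Measure.map_map ((measurable_Tk q k).iterate n) hX]
    rfl
  -- the final estimate
  refine ⟨m, fun n hn => ?_⟩
  have hbound : dTVk k (Measure.map (fun ω => (Tk q k)^[n] (X ω)) ℙ)
      (volume.restrict (cube k)) ≤ ε/2 := by
    apply Real.iSup_le _ (by positivity)
    rintro ⟨A, hA⟩
    have hTn : Measurable ((Tk q k)^[n]) := (measurable_Tk q k).iterate n
    set W : Set (Fin k → ℝ) := (Tk q k)^[n] ⁻¹' A with hW_def
    have hW : MeasurableSet W := hTn hA
    have hterm1 : |((volume.withDensity fun x => ENNReal.ofReal (f x)) W).toReal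
        - ((volume.withDensity fun x => ENNReal.ofReal (g x)) W).toReal| ≤ ε/4 := by
      rw [toReal_wd f hf_int hf_nonneg W hW, toReal_wd g hg_int hg_nonneg W hW,
        ← integral_sub hf_int.restrict hg_int.restrict]
      calc |∫ x in W, (f x - g x)| ≤ ∫ x in W, |f x - g x| := by
            rw [← Real.norm_eq_abs]
            exact (norm_integral_le_integral_norm _).trans (le_of_eq (by simp [Real.norm_eq_abs]))
        _ ≤ ∫ x, |f x - g x| :=
            setIntegral_le_integral ((hf_int.sub hg_int).abs)
              (Filter.Eventually.of_forall (fun x => abs_nonneg _))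
        _ ≤ ε/4 := hfg
    have hμA1 : (volume.restrict (cube k)) A ≤ 1 := by
      rw [Measure.restrict_apply hA]
      calc volume (A ∩ cube k) ≤ volume (cube k) := measure_mono Set.inter_subset_right
        _ = 1 := volume_cube k
    have hμAR : ((volume.restrict (cube k)) A).toReal ≤ 1 := by
      calc ((volume.restrict (cube k)) A).toReal ≤ (1 : ENNReal).toReal :=
            ENNReal.toReal_mono (by simp) hμA1
        _ = 1 := by simp
    have hμAnn : 0 ≤ ((volume.restrict (cube k)) A).toReal := ENNReal.toReal_nonneg
    have hterm2 : |((Measure.map ((Tk q k)^[n]) (volume.withDensity fun x =>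
        ENNReal.ofReal (g x))) A).toReal - ((volume.restrict (cube k)) A).toReal| ≤ ε/4 := by
      rw [hmap n hn, Measure.smul_apply, smul_eq_mul, hκ,
        ENNReal.toReal_mul, ENNReal.toReal_ofReal (integral_nonneg hg_nonneg)]
      set t : ℝ := ((volume.restrict (cube k)) A).toReal
      calc |(∫ x, g x) * t - t| = |(∫ x, g x) - 1| * |t| := by
            rw [← abs_mul]; congr 1; ring
        _ = |(∫ x, g x) - 1| * t := by rw [abs_of_nonneg hμAnn]
        _ ≤ (ε/4) * 1 := mul_le_mul hg_integral hμAR hμAnn (by positivity)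
        _ = ε/4 := by ring
    rw [hPn n]
    have hmapapp : (Measure.map ((Tk q k)^[n]) (volume.withDensity fun x =>
        ENNReal.ofReal (f x))) A = (volume.withDensity fun x => ENNReal.ofReal (f x)) W := by
      rw [Measure.map_apply hTn hA]
    have hmapapp2 : (Measure.map ((Tk q k)^[n]) (volume.withDensity fun x =>
        ENNReal.ofReal (g x))) A = (volume.withDensity fun x => ENNReal.ofReal (g x)) W := by
      rw [Measure.map_apply hTn hA]
    calc |((Measure.map ((Tk q k)^[n]) (volume.withDensity fun x =>
          ENNReal.ofReal (f x))) A).toReal - ((volume.restrict (cube k)) A).toReal|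
        ≤ |((Measure.map ((Tk q k)^[n]) (volume.withDensity fun x =>
            ENNReal.ofReal (f x))) A).toReal - ((Measure.map ((Tk q k)^[n])
            (volume.withDensity fun x => ENNReal.ofReal (g x))) A).toReal|
          + |((Measure.map ((Tk q k)^[n]) (volume.withDensity fun x =>
            ENNReal.ofReal (g x))) A).toReal - ((volume.restrict (cube k)) A).toReal| :=
          abs_sub_le _ _ _
      _ ≤ ε/4 + ε/4 := by
          refine add_le_add ?_ hterm2
          rw [hmapapp, hmapapp2]
          exact hterm1
      _ = ε/2 := by ring
  have hnn : 0 ≤ dTVk k (Measure.map (fun ω => (Tk q k)^[n] (X ω)) ℙ)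
      (volume.restrict (cube k)) :=
    Real.iSup_nonneg (fun A => abs_nonneg _)
  rw [Real.dist_eq, sub_zero, abs_of_nonneg hnn]
  linarith
end

section
/- Let q ≥ 2 and k ≥ 1 be integers and let f be a probability density function on (0,1)^k with ‖f‖_∞ = sup_{(0,1)^k} |f| < ∞ which is continuous on (0,1)^k except at finitely many points. Then sup_{x ∈ (0,1)^k} |f_n(x) − 1| → 0 as n → ∞, where f_n(x) = q^{−nk} Σ_{j ∈ {0,…,q^n−1}^k} f(q^{−n}(j + x)) is the density of T^n(X) when X has density f and T is applied coordinatewise. -/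
open MeasureTheory Set Filter

lemma card_between (N : ℕ) (a b : ℝ) (hab : a ≤ b) :
    ((Finset.univ.filter fun m : Fin N => a < (m:ℝ) ∧ (m:ℝ) < b).card : ℝ) ≤ b - a + 1 := by
  have h1 : (Finset.univ.filter fun m : Fin N => a < (m:ℝ) ∧ (m:ℝ) < b).card
      ≤ (Finset.Ioo ⌊a⌋ ⌈b⌉).card := by
    refine Finset.card_le_card_of_injOn (fun m => (m : ℤ)) ?_ ?_
    · intro m hm
      simp only [Finset.coe_filter, Finset.mem_coe, Finset.mem_filter, Finset.mem_univ, true_and, Set.mem_setOf_eq] at hm ⊢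
      rw [Finset.mem_Ioo]
      exact ⟨Int.floor_lt.2 (by exact_mod_cast hm.1), Int.lt_ceil.2 (by exact_mod_cast hm.2)⟩
    · intro m _ m' _ h
      simp only at h
      exact Fin.val_injective (by exact_mod_cast h)
  have hfl := Int.sub_one_lt_floor a
  have hcl := Int.ceil_lt_add_one b
  have h2 : ((Finset.Ioo ⌊a⌋ ⌈b⌉).card : ℝ) ≤ b - a + 1 := by
    rw [Int.card_Ioo]
    rcases le_or_gt (⌈b⌉ - ⌊a⌋ - 1) 0 with h | h
    · rw [Int.toNat_of_nonpos h]
      push_cast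
      linarith
    · have : ((⌈b⌉ - ⌊a⌋ - 1).toNat : ℝ) = ((⌈b⌉:ℝ) - (⌊a⌋:ℝ) - 1) := by
        rw [← Int.cast_natCast, Int.toNat_of_nonneg h.le]
        push_cast
        ring
      rw [this]
      linarith
  calc ((Finset.univ.filter fun m : Fin N => a < (m:ℝ) ∧ (m:ℝ) < b).card : ℝ)
      ≤ ((Finset.Ioo ⌊a⌋ ⌈b⌉).card : ℝ) := by exact_mod_cast h1
    _ ≤ b - a + 1 := h2

lemma unif_cont {α : Type*} [PseudoMetricSpace α] {K : Set α} (hK : IsCompact K)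
    (f : α → ℝ) (hf : ∀ z ∈ K, ContinuousAt f z) {ε : ℝ} (hε : 0 < ε) :
    ∃ r > 0, ∀ z ∈ K, ∀ y, dist y z ≤ r → |f y - f z| ≤ ε := by
  have h := hK.uniformContinuousAt_of_continuousAt f hf (Metric.dist_mem_uniformity hε)
  rw [Metric.mem_uniformity_dist] at h
  obtain ⟨δ, hδ, hδ'⟩ := h
  refine ⟨δ/2, half_pos hδ, fun z hz y hy => ?_⟩
  have h1 : dist z y < δ := by rw [dist_comm]; exact lt_of_le_of_lt hy (by linarith)
  have h2 : dist (f z) (f y) < ε := hδ' h1 hz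
  rw [← Real.dist_eq, dist_comm]
  exact h2.le

set_option maxHeartbeats 2000000 in
lemma main_bound (k : ℕ) (hk : 1 ≤ k) (f : (Fin k → ℝ) → ℝ)
    (hf_meas : Measurable f) (hf_nonneg : ∀ x, 0 ≤ f x)
    (hf_supp : ∀ x, x ∉ {y : Fin k → ℝ | ∀ i, y i ∈ Set.Ioo (0:ℝ) 1} → f x = 0)
    (hf_pdf : ∫ x in {y : Fin k → ℝ | ∀ i, y i ∈ Set.Ioo (0:ℝ) 1}, f x = 1)
    (hbdd : BddAbove ((fun x => |f x|) '' {y : Fin k → ℝ | ∀ i, y i ∈ Set.Ioo (0:ℝ) 1}))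
    (hcont : ∃ S : Finset (Fin k → ℝ),
      ∀ x ∈ {y : Fin k → ℝ | ∀ i, y i ∈ Set.Ioo (0:ℝ) 1}, x ∉ S → ContinuousAt f x)
    {ε : ℝ} (hε : 0 < ε) :
    ∃ N₀ : ℕ, ∀ N : ℕ, N₀ ≤ N → ∀ x ∈ {y : Fin k → ℝ | ∀ i, y i ∈ Set.Ioo (0:ℝ) 1},
      |((N:ℝ))⁻¹ ^ k * (∑ j : Fin k → Fin N, f fun i => ((j i : ℝ) + x i) / N) - 1| ≤ ε := by
  classical
  set C : Set (Fin k → ℝ) := {y : Fin k → ℝ | ∀ i, y i ∈ Set.Ioo (0:ℝ) 1} with hCdef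
  obtain ⟨S, hS⟩ := hcont
  obtain ⟨M, hM⟩ := hbdd
  have hhalf : (fun _ : Fin k => (1:ℝ)/2) ∈ C := fun i => ⟨by norm_num, by norm_num⟩
  have hM0 : 0 ≤ M := le_trans (abs_nonneg _) (hM ⟨_, hhalf, rfl⟩)
  have hMb : ∀ y, |f y| ≤ M := by
    intro y
    by_cases hy : y ∈ C
    · exact hM ⟨y, hy, rfl⟩
    · rw [hf_supp y hy, abs_zero]; exact hM0
  have hCpi : C = Set.pi Set.univ (fun _ : Fin k => Set.Ioo (0:ℝ) 1) := by
    ext y; simp [Set.mem_pi, hCdef]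
  have MC : MeasurableSet C := by
    rw [hCpi]; exact MeasurableSet.univ_pi fun _ => measurableSet_Ioo
  have hInt : Integrable f := by
    refine Integrable.mono' (g := C.indicator fun _ => M) ?_ hf_meas.aestronglyMeasurable
      (Filter.Eventually.of_forall ?_)
    · rw [integrable_indicator_iff MC]
      refine integrableOn_const ?_ (by simp)
      rw [hCpi, volume_pi_pi]
      simp [Real.volume_Ioo]
    · intro y
      by_cases hy : y ∈ C
      · rw [Set.indicator_of_mem hy]; exact hMb y
      · rw [Set.indicator_of_notMem hy, hf_supp y hy]; simp
  -- choice of δ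
  set c : ℝ := 12 * M * (k + S.card) + 1 with hcdef
  have hc0 : 0 < c := by positivity
  set δ : ℝ := min (1/4) (ε / c) with hδdef
  have hδ0 : 0 < δ := lt_min (by norm_num) (div_pos hε hc0)
  have hδ14 : δ ≤ 1/4 := min_le_left _ _
  have hδε : δ ≤ ε / c := min_le_right _ _
  -- the compact set K
  set K : Set (Fin k → ℝ) :=
    (Set.pi Set.univ fun _ : Fin k => Set.Icc δ (1-δ)) \ ⋃ s ∈ (S : Set (Fin k → ℝ)), Metric.ball s δ
    with hKdef
  have hKcomp : IsCompact K :=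
    (isCompact_univ_pi fun _ => isCompact_Icc).diff
      (isOpen_biUnion fun s _ => Metric.isOpen_ball)
  have hKsub : ∀ z ∈ K, z ∈ C ∧ z ∉ S := by
    intro z hz
    obtain ⟨hz1, hz2⟩ := hz
    constructor
    · intro i
      have := hz1 i (Set.mem_univ i)
      exact ⟨lt_of_lt_of_le hδ0 this.1, lt_of_le_of_lt this.2 (by linarith)⟩
    · intro hzS
      exact hz2 (Set.mem_biUnion hzS (Metric.mem_ball_self hδ0))
  obtain ⟨r, hr0, hr⟩ := unif_cont hKcomp f
    (fun z hz => hS z (hKsub z hz).1 (hKsub z hz).2) (half_pos hε)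
  refine ⟨⌈4/δ⌉₊ + ⌈1/r⌉₊ + 1, fun N hN x hx => ?_⟩
  have hN1 : 1 ≤ N := by omega
  have hNpos : (0:ℝ) < N := by exact_mod_cast hN1
  have h4N : 4 / δ ≤ (N:ℝ) := le_trans (Nat.le_ceil _) (by exact_mod_cast by omega)
  have h1N : 1 / r ≤ (N:ℝ) := le_trans (Nat.le_ceil _) (by exact_mod_cast by omega)
  have hNδ : 4 / (N:ℝ) ≤ δ := by
    rw [div_le_iff₀ hNpos]
    have := (div_le_iff₀ hδ0).1 h4N
    linarith
  have hNr : 1 / (N:ℝ) ≤ r := by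
    rw [div_le_iff₀ hNpos]
    have := (div_le_iff₀ hr0).1 h1N
    linarith
  -- cubes and tags
  set t : (Fin k → Fin N) → (Fin k → ℝ) := fun j i => ((j i : ℝ) + x i) / N with htdef
  set Q : (Fin k → Fin N) → Set (Fin k → ℝ) :=
    fun j => Set.pi Set.univ fun i => Set.Ico ((j i : ℝ)/N) (((j i : ℝ)+1)/N) with hQdef
  have hx' : ∀ i, 0 < x i ∧ x i < 1 := fun i => ⟨(hx i).1, (hx i).2⟩
  have htmem : ∀ j (i : Fin k), (j i : ℝ)/N < t j i ∧ t j i < ((j i : ℝ)+1)/N := by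
    intro j i
    constructor
    · exact div_lt_div_of_pos_right (by linarith [(hx' i).1]) hNpos
    · exact div_lt_div_of_pos_right (by linarith [(hx' i).2]) hNpos
  have hQmeas : ∀ j, MeasurableSet (Q j) :=
    fun j => MeasurableSet.univ_pi fun _ => measurableSet_Ico
  have hQvol : ∀ j, volume (Q j) = ENNReal.ofReal ((N:ℝ)⁻¹) ^ k := by
    intro j
    rw [hQdef]
    rw [volume_pi_pi]
    have : ∀ i : Fin k, volume (Set.Ico ((j i : ℝ)/N) (((j i : ℝ)+1)/N))
        = ENNReal.ofReal ((N:ℝ)⁻¹) := by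
      intro i
      rw [Real.volume_Ico]
      congr 1
      field_simp
      ring
    simp only [this, Finset.prod_const, Finset.card_univ, Fintype.card_fin]
  have hQfin : ∀ j, volume (Q j) < ⊤ := by
    intro j; rw [hQvol j]
    exact ENNReal.pow_lt_top ENNReal.ofReal_lt_top
  have hQtoReal : ∀ j, (volume (Q j)).toReal = (N:ℝ)⁻¹ ^ k := by
    intro j; rw [hQvol j, ENNReal.toReal_pow, ENNReal.toReal_ofReal (by positivity)]
  -- partition
  have hQunion : Set.pi Set.univ (fun _ : Fin k => Set.Ico (0:ℝ) 1) = ⋃ j, Q j := by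
    ext y
    simp only [Set.mem_pi, Set.mem_iUnion, Set.mem_Ico, Set.mem_univ, true_implies, hQdef]
    constructor
    · intro h
      have hlt : ∀ i, ⌊y i * N⌋₊ < N := by
        intro i
        rw [Nat.floor_lt (mul_nonneg (h i).1 hNpos.le)]
        calc y i * N < 1 * N := by
              exact mul_lt_mul_of_pos_right (h i).2 hNpos
          _ = N := one_mul _
      refine ⟨fun i => ⟨⌊y i * N⌋₊, hlt i⟩, fun i => ⟨?_, ?_⟩⟩
      · rw [div_le_iff₀ hNpos]
        exact Nat.floor_le (mul_nonneg (h i).1 hNpos.le)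
      · rw [lt_div_iff₀ hNpos]
        push_cast
        exact Nat.lt_floor_add_one _
    · rintro ⟨j, hj⟩ i
      have h1 := (hj i).1
      have h2 := (hj i).2
      have hjN : ((j i : ℝ) + 1) ≤ N := by
        have : (j i : ℕ) < N := (j i).is_lt
        exact_mod_cast Nat.succ_le_of_lt this
      constructor
      · exact le_trans (by positivity) h1
      · exact lt_of_lt_of_le h2 (by rw [div_le_one hNpos]; exact hjN)
  have hQdisj : Pairwise (Function.onFun Disjoint Q) := by
    intro j j' hjj
    rw [Function.onFun]
    rw [Set.disjoint_left]
    intro y hy hy'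
    have : ∀ i, j i = j' i := by
      intro i
      have h1 := hy i (Set.mem_univ i)
      have h2 := hy' i (Set.mem_univ i)
      simp only [Set.mem_Ico] at h1 h2
      by_contra hne
      have hne' : (j i : ℕ) ≠ (j' i : ℕ) := fun h => hne (Fin.val_injective h)
      rcases lt_or_gt_of_ne hne' with hlt | hlt
      · have hc : ((j i : ℝ) + 1) ≤ (j' i : ℝ) := by exact_mod_cast Nat.succ_le_of_lt hlt
        have hle : ((j i : ℝ) + 1)/(N:ℝ) ≤ ((j' i : ℝ))/(N:ℝ) := by gcongr
        linarith [h1.2, h2.1]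
      · have hc : ((j' i : ℝ) + 1) ≤ (j i : ℝ) := by exact_mod_cast Nat.succ_le_of_lt hlt
        have hle : ((j' i : ℝ) + 1)/(N:ℝ) ≤ ((j i : ℝ))/(N:ℝ) := by gcongr
        linarith [h2.2, h1.1]
    exact hjj (funext fun i => this i)
  have hsum1 : ∑ j : Fin k → Fin N, ∫ y in Q j, f y = 1 := by
    have h1 : ∫ y in Set.pi Set.univ (fun _ : Fin k => Set.Ico (0:ℝ) 1), f y
        = ∫ y in C, f y := by
      apply setIntegral_eq_of_subset_of_forall_diff_eq_zero
        (MeasurableSet.univ_pi fun _ => measurableSet_Ico)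
      · intro y hy
        rw [Set.mem_univ_pi]
        intro i
        exact ⟨(hy i).1.le, (hy i).2⟩
      · intro y hy
        exact hf_supp y hy.2
    rw [hf_pdf] at h1
    rw [hQunion, integral_iUnion hQmeas hQdisj hInt.integrableOn, tsum_fintype] at h1
    exact h1
  -- per-cube estimate
  set B : (Fin k → Fin N) → ℝ := fun j => if t j ∈ K then ε/2 else 2*M with hBdef
  have hcube : ∀ j, |(N:ℝ)⁻¹^k * f (t j) - ∫ y in Q j, f y| ≤ B j * (N:ℝ)⁻¹^k := by
    intro j
    have hdist : ∀ y ∈ Q j, dist y (t j) ≤ 1/(N:ℝ) := by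
      intro y hy
      rw [dist_pi_le_iff (by positivity)]
      intro i
      have h1 := hy i (Set.mem_univ i)
      simp only [Set.mem_Ico] at h1
      have h2 := htmem j i
      have hba : ((j i : ℝ)+1)/N - ((j i : ℝ))/N = 1/(N:ℝ) := by field_simp; ring
      rw [Real.dist_eq, abs_le]
      constructor <;> [skip; skip] <;> linarith [h1.1, h1.2, h2.1, h2.2]
    have hdiff : ∀ y ∈ Q j, ‖f (t j) - f y‖ ≤ B j := by
      intro y hy
      rw [Real.norm_eq_abs]
      by_cases hK : t j ∈ K
      · have hBj : B j = ε/2 := by rw [hBdef]; simp only [if_pos hK]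
        rw [hBj, abs_sub_comm]
        exact hr (t j) hK y (le_trans (hdist y hy) hNr)
      · have hBj : B j = 2*M := by rw [hBdef]; simp only [if_neg hK]
        rw [hBj]
        have htri := abs_add_le (f (t j)) (-(f y))
        rw [← sub_eq_add_neg, abs_neg] at htri
        linarith [hMb (t j), hMb y]
    have hconst : IntegrableOn (fun _ : Fin k → ℝ => f (t j)) (Q j) :=
      integrableOn_const (hQfin j).ne (by simp)
    have heq : ∫ y in Q j, (f (t j) - f y) = (N:ℝ)⁻¹^k * f (t j) - ∫ y in Q j, f y := by
      rw [integral_sub hconst hInt.integrableOn, setIntegral_const, measureReal_def, hQtoReal j, smul_eq_mul]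
    have hb := norm_setIntegral_le_of_norm_le_const (μ := volume) (s := Q j) (hQfin j) hdiff
    rw [heq, Real.norm_eq_abs, measureReal_def, hQtoReal j] at hb
    exact hb
  -- counting
  set χE : Fin k → Fin N → ℝ :=
    fun _ m => if (m:ℝ) < δ*N ∨ (1-δ)*N - 1 < (m:ℝ) then 1 else 0 with hχEdef
  set χS : (Fin k → ℝ) → Fin k → Fin N → ℝ :=
    fun s i m => if (s i - δ)*N - 1 < (m:ℝ) ∧ (m:ℝ) < (s i + δ)*N then 1 else 0 with hχSdef
  have hχE01 : ∀ i m, 0 ≤ χE i m := by intro i m; rw [hχEdef]; positivity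
  have hχS01 : ∀ s i m, 0 ≤ χS s i m := by intro s i m; rw [hχSdef]; positivity
  have hpoint : ∀ j, B j ≤ ε/2 + 2*M*((∑ i, χE i (j i)) + ∑ s ∈ S, ∏ i, χS s i (j i)) := by
    intro j
    have hEnn : 0 ≤ ∑ i, χE i (j i) := Finset.sum_nonneg fun i _ => hχE01 i (j i)
    have hSnn : 0 ≤ ∑ s ∈ S, ∏ i, χS s i (j i) :=
      Finset.sum_nonneg fun s _ => Finset.prod_nonneg fun i _ => hχS01 s i (j i)
    by_cases hK : t j ∈ K
    · have hBj : B j = ε/2 := by rw [hBdef]; simp only [if_pos hK]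
      rw [hBj]
      have := mul_nonneg (by linarith : (0:ℝ) ≤ 2*M) (add_nonneg hEnn hSnn)
      linarith
    · have hBj : B j = 2*M := by rw [hBdef]; simp only [if_neg hK]
      rw [hBj]
      have hone : 1 ≤ (∑ i, χE i (j i)) + ∑ s ∈ S, ∏ i, χS s i (j i) := by
        rw [hKdef] at hK
        by_cases hpi : t j ∈ Set.pi Set.univ fun _ : Fin k => Set.Icc δ (1-δ)
        · have hball : t j ∈ ⋃ s ∈ (S : Set (Fin k → ℝ)), Metric.ball s δ := by
            by_contra hb
            exact hK ⟨hpi, hb⟩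
          rw [Set.mem_iUnion₂] at hball
          obtain ⟨s, hsS, hball⟩ := hball
          have hsS' : s ∈ S := hsS
          have hprod : ∏ i, χS s i (j i) = 1 := by
            apply Finset.prod_eq_one
            intro i _
            have hdisti : dist (t j i) (s i) < δ :=
              lt_of_le_of_lt (dist_le_pi_dist (t j) s i) (Metric.mem_ball.1 hball)
            rw [Real.dist_eq, abs_lt] at hdisti
            have h2 := htmem j i
            simp only [hχSdef]
            rw [if_pos]
            constructor
            · have := (lt_div_iff₀ hNpos).1 (by linarith [h2.2] : s i - δ < ((j i : ℝ)+1)/N)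
              linarith
            · have := (div_lt_iff₀ hNpos).1 (by linarith [h2.1] : ((j i : ℝ))/N < s i + δ)
              linarith
          have hle := Finset.single_le_sum
            (f := fun s => ∏ i, χS s i (j i))
            (fun s _ => Finset.prod_nonneg fun i _ => hχS01 s i (j i)) hsS'
          have hle' : (1:ℝ) ≤ ∑ s ∈ S, ∏ i, χS s i (j i) := by simpa [hprod] using hle
          linarith
        · have hex : ∃ i, t j i ∉ Set.Icc δ (1-δ) := by
            by_contra hc
            push_neg at hc
            exact hpi fun i _ => hc i
          obtain ⟨i, hi⟩ := hex
          rw [Set.mem_Icc, not_and_or, not_le, not_le] at hi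
          have hone' : χE i (j i) = 1 := by
            simp only [hχEdef]
            rw [if_pos]
            rcases hi with hi | hi
            · left
              have := (div_lt_iff₀ hNpos).1 (lt_trans (htmem j i).1 hi)
              linarith
            · right
              have := (lt_div_iff₀ hNpos).1 (lt_trans hi (htmem j i).2)
              linarith
          have hle := Finset.single_le_sum (f := fun i => χE i (j i))
            (fun i _ => hχE01 i (j i)) (Finset.mem_univ i)
          have hle' : (1:ℝ) ≤ ∑ i, χE i (j i) := by simpa [hone'] using hle
          linarith
      have h2 : 2*M*1 ≤ 2*M*((∑ i, χE i (j i)) + ∑ s ∈ S, ∏ i, χS s i (j i)) :=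
        mul_le_mul_of_nonneg_left hone (by linarith)
      linarith
  have hsumE : ∀ i : Fin k, (∑ j : Fin k → Fin N, χE i (j i))
      ≤ (2*δ*(N:ℝ) + 4) * (N:ℝ)^(k-1) := by
    intro i
    have hbound : (∑ m : Fin N, χE i m) ≤ 2*δ*(N:ℝ) + 4 := by
      have hsplit : ∀ m : Fin N, χE i m ≤ (if (m:ℝ) < δ*N then (1:ℝ) else 0)
          + (if (1-δ)*N - 1 < (m:ℝ) then (1:ℝ) else 0) := by
        intro m
        simp only [hχEdef]
        split_ifs <;> norm_num <;> tauto
      have hc1 : ((Finset.univ.filter fun m : Fin N => (m:ℝ) < δ*N).card : ℝ)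
          ≤ δ*(N:ℝ) + 2 := by
        have heq : (Finset.univ.filter fun m : Fin N => (m:ℝ) < δ*N)
            = (Finset.univ.filter fun m : Fin N => (-1:ℝ) < (m:ℝ) ∧ (m:ℝ) < δ*N) := by
          apply Finset.filter_congr
          intro m _
          have hm : (-1:ℝ) < (m:ℝ) := lt_of_lt_of_le (by norm_num) (Nat.cast_nonneg _)
          exact (and_iff_right hm).symm
        rw [heq]
        have := card_between N (-1) (δ*N)
          (by nlinarith [mul_nonneg hδ0.le hNpos.le])
        linarith
      have hc2 : ((Finset.univ.filter fun m : Fin N => (1-δ)*N - 1 < (m:ℝ)).card : ℝ)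
          ≤ δ*(N:ℝ) + 2 := by
        have heq : (Finset.univ.filter fun m : Fin N => (1-δ)*N - 1 < (m:ℝ))
            = (Finset.univ.filter fun m : Fin N => (1-δ)*N - 1 < (m:ℝ) ∧ (m:ℝ) < (N:ℝ)) := by
          apply Finset.filter_congr
          intro m _
          have hm : (m:ℝ) < (N:ℝ) := by exact_mod_cast m.is_lt
          exact (and_iff_left hm).symm
        rw [heq]
        have := card_between N ((1-δ)*N - 1) (N:ℝ)
          (by nlinarith [hNpos.le, hδ0.le, mul_nonneg hδ0.le hNpos.le])
        nlinarith [this]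
      calc (∑ m : Fin N, χE i m)
          ≤ ∑ m : Fin N, ((if (m:ℝ) < δ*N then (1:ℝ) else 0)
              + (if (1-δ)*N - 1 < (m:ℝ) then (1:ℝ) else 0)) :=
            Finset.sum_le_sum fun m _ => hsplit m
        _ = ((Finset.univ.filter fun m : Fin N => (m:ℝ) < δ*N).card : ℝ)
            + ((Finset.univ.filter fun m : Fin N => (1-δ)*N - 1 < (m:ℝ)).card : ℝ) := by
            rw [Finset.sum_add_distrib, Finset.sum_boole, Finset.sum_boole]
        _ ≤ 2*δ*(N:ℝ) + 4 := by linarith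
    have hfac : ∀ j : Fin k → Fin N,
        χE i (j i) = ∏ i' : Fin k, (if i' = i then χE i (j i') else 1) := by
      intro j
      rw [Finset.prod_ite_eq' Finset.univ i (fun i' => χE i (j i'))]
      simp
    calc (∑ j : Fin k → Fin N, χE i (j i))
        = ∑ j : Fin k → Fin N, ∏ i' : Fin k, (if i' = i then χE i (j i') else 1) :=
          Finset.sum_congr rfl fun j _ => hfac j
      _ = ∏ i' : Fin k, ∑ m : Fin N, (if i' = i then χE i m else 1) := by
          rw [Finset.prod_univ_sum (fun _ => Finset.univ)
            (fun i' m => if i' = i then χE i m else 1), Fintype.piFinset_univ]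
      _ ≤ (2*δ*(N:ℝ) + 4) * (N:ℝ)^(k-1) := by
          rw [← Finset.mul_prod_erase Finset.univ _ (Finset.mem_univ i)]
          have h2 : ∀ i' ∈ Finset.univ.erase i,
              (∑ m : Fin N, if i' = i then χE i m else 1) = (N:ℝ) := by
            intro i' hi'
            rw [Finset.mem_erase] at hi'
            simp [hi'.1]
          rw [Finset.prod_congr rfl h2, Finset.prod_const,
            Finset.card_erase_of_mem (Finset.mem_univ i), Finset.card_univ, Fintype.card_fin]
          have h1 : (∑ m : Fin N, if i = i then χE i m else 1) = ∑ m : Fin N, χE i m := by simp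
          rw [h1]
          exact mul_le_mul_of_nonneg_right hbound (by positivity)
  have hsumS : ∀ s ∈ S, (∑ j : Fin k → Fin N, ∏ i, χS s i (j i)) ≤ (2*δ*(N:ℝ) + 2)^k := by
    intro s _
    have hps : (∏ i : Fin k, ∑ m : Fin N, χS s i m)
        = ∑ j : Fin k → Fin N, ∏ i, χS s i (j i) := by
      rw [Finset.prod_univ_sum (fun _ => Finset.univ) (fun i m => χS s i m),
        Fintype.piFinset_univ]
    rw [← hps]
    have hbound : ∀ i : Fin k, (∑ m : Fin N, χS s i m) ≤ 2*δ*(N:ℝ) + 2 := by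
      intro i
      have heq : (∑ m : Fin N, χS s i m)
          = ((Finset.univ.filter fun m : Fin N =>
              (s i - δ)*N - 1 < (m:ℝ) ∧ (m:ℝ) < (s i + δ)*N).card : ℝ) := by
        simp only [hχSdef]
        rw [Finset.sum_boole]
      rw [heq]
      have := card_between N ((s i - δ)*N - 1) ((s i + δ)*N)
        (by nlinarith [mul_nonneg hδ0.le hNpos.le])
      nlinarith [this]
    calc (∏ i : Fin k, ∑ m : Fin N, χS s i m)
        ≤ ∏ _i : Fin k, (2*δ*(N:ℝ) + 2) :=
          Finset.prod_le_prod (fun i _ => Finset.sum_nonneg fun m _ => hχS01 s i m)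
            (fun i _ => hbound i)
      _ = (2*δ*(N:ℝ) + 2)^k := by
          rw [Finset.prod_const, Finset.card_univ, Fintype.card_fin]
  -- putting it together
  clear_value B χE χS t Q
  have hu0 : 0 ≤ ((N:ℝ)⁻¹^k) := by positivity
  have hNk : (N:ℝ)^(k-1) * (N:ℝ) = (N:ℝ)^k := by
    rw [← pow_succ]
    congr 1
    omega
  have huNk : ((N:ℝ)⁻¹^k) * (N:ℝ)^k = 1 := by
    rw [inv_pow]
    exact inv_mul_cancel₀ (pow_ne_zero _ hNpos.ne')
  have hu1 : ((N:ℝ)⁻¹^k) * (N:ℝ)^(k-1) = 1/(N:ℝ) := by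
    rw [eq_div_iff hNpos.ne', mul_assoc, hNk, huNk]
  have hcard : ((Finset.univ : Finset (Fin k → Fin N)).card : ℝ) = (N:ℝ)^k := by
    rw [Finset.card_univ, Fintype.card_fun, Fintype.card_fin, Fintype.card_fin]
    push_cast
    ring
  have hE : ∑ j : Fin k → Fin N, ∑ i, χE i (j i)
      ≤ (k:ℝ) * ((2*δ*(N:ℝ)+4) * (N:ℝ)^(k-1)) := by
    rw [Finset.sum_comm]
    calc ∑ i : Fin k, ∑ j : Fin k → Fin N, χE i (j i)
        ≤ ∑ _i : Fin k, (2*δ*(N:ℝ)+4) * (N:ℝ)^(k-1) := Finset.sum_le_sum fun i _ => hsumE i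
      _ = (k:ℝ) * ((2*δ*(N:ℝ)+4) * (N:ℝ)^(k-1)) := by
          rw [Finset.sum_const, Finset.card_univ, Fintype.card_fin, nsmul_eq_mul]
  have hP : ∑ j : Fin k → Fin N, ∑ s ∈ S, ∏ i, χS s i (j i)
      ≤ (S.card:ℝ) * (2*δ*(N:ℝ)+2)^k := by
    rw [Finset.sum_comm]
    calc ∑ s ∈ S, ∑ j : Fin k → Fin N, ∏ i, χS s i (j i)
        ≤ ∑ _s ∈ S, (2*δ*(N:ℝ)+2)^k := Finset.sum_le_sum hsumS
      _ = (S.card:ℝ) * (2*δ*(N:ℝ)+2)^k := by rw [Finset.sum_const, nsmul_eq_mul]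
  have e1 : (ε/2)*((N:ℝ)⁻¹^k)*((Finset.univ : Finset (Fin k → Fin N)).card : ℝ) = ε/2 := by
    rw [hcard, mul_assoc, huNk, mul_one]
  have e2 : (2*M*((N:ℝ)⁻¹^k)) * ((k:ℝ) * ((2*δ*(N:ℝ)+4) * (N:ℝ)^(k-1))) ≤ 2*M*(k:ℝ)*(3*δ) := by
    have hq : ((N:ℝ)⁻¹^k) * ((2*δ*(N:ℝ)+4) * (N:ℝ)^(k-1)) = 2*δ + 4/(N:ℝ) := by
      calc ((N:ℝ)⁻¹^k) * ((2*δ*(N:ℝ)+4) * (N:ℝ)^(k-1))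
          = (2*δ*(N:ℝ)+4) * (((N:ℝ)⁻¹^k) * (N:ℝ)^(k-1)) := by ring
        _ = (2*δ*(N:ℝ)+4) * (1/(N:ℝ)) := by rw [hu1]
        _ = 2*δ + 4/(N:ℝ) := by field_simp
    calc (2*M*((N:ℝ)⁻¹^k)) * ((k:ℝ) * ((2*δ*(N:ℝ)+4) * (N:ℝ)^(k-1)))
        = 2*M*(k:ℝ)*(((N:ℝ)⁻¹^k) * ((2*δ*(N:ℝ)+4)*(N:ℝ)^(k-1))) := by ring
      _ = 2*M*(k:ℝ)*(2*δ + 4/(N:ℝ)) := by rw [hq]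
      _ ≤ 2*M*(k:ℝ)*(3*δ) := by
          apply mul_le_mul_of_nonneg_left (by linarith only [hNδ])
            (mul_nonneg (mul_nonneg (by norm_num) hM0) (Nat.cast_nonneg k))
  have e3 : (2*M*((N:ℝ)⁻¹^k)) * ((S.card:ℝ) * (2*δ*(N:ℝ)+2)^k) ≤ 2*M*(S.card:ℝ)*(3*δ) := by
    have hq : ((N:ℝ)⁻¹^k) * (2*δ*(N:ℝ)+2)^k = (2*δ + 2/(N:ℝ))^k := by
      rw [← mul_pow]
      congr 1
      field_simp
    have h3δ : (2*δ + 2/(N:ℝ))^k ≤ 3*δ := by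
      have h2N : 2/(N:ℝ) ≤ 4/(N:ℝ) := by gcongr <;> norm_num
      have h1 : 2*δ + 2/(N:ℝ) ≤ 3*δ := by linarith only [hNδ, h2N]
      have h0 : 0 ≤ 2*δ + 2/(N:ℝ) := add_nonneg (by linarith only [hδ0]) (by positivity)
      calc (2*δ + 2/(N:ℝ))^k ≤ (3*δ)^k := pow_le_pow_left₀ h0 h1 k
        _ ≤ (3*δ)^1 := pow_le_pow_of_le_one (by linarith only [hδ0]) (by linarith only [hδ14]) hk
        _ = 3*δ := pow_one _
    calc (2*M*((N:ℝ)⁻¹^k)) * ((S.card:ℝ) * (2*δ*(N:ℝ)+2)^k)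
        = 2*M*(S.card:ℝ) * (((N:ℝ)⁻¹^k) * (2*δ*(N:ℝ)+2)^k) := by ring
      _ = 2*M*(S.card:ℝ) * (2*δ + 2/(N:ℝ))^k := by rw [hq]
      _ ≤ 2*M*(S.card:ℝ)*(3*δ) := mul_le_mul_of_nonneg_left h3δ (mul_nonneg (mul_nonneg (by norm_num) hM0) (Nat.cast_nonneg _))
  have hfinal : 2*M*(k:ℝ)*(3*δ) + 2*M*(S.card:ℝ)*(3*δ) ≤ ε/2 := by
    have h1 : 2*M*(k:ℝ)*(3*δ) + 2*M*(S.card:ℝ)*(3*δ) = 6*M*((k:ℝ)+(S.card:ℝ))*δ := by ring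
    rw [h1]
    have ha0 : 0 ≤ 6*M*((k:ℝ)+(S.card:ℝ)) := mul_nonneg (mul_nonneg (by norm_num) hM0) (add_nonneg (Nat.cast_nonneg _) (Nat.cast_nonneg _))
    have h2 : 6*M*((k:ℝ)+(S.card:ℝ)) * δ ≤ 6*M*((k:ℝ)+(S.card:ℝ)) * (ε/c) :=
      mul_le_mul_of_nonneg_left hδε ha0
    have h3 : 6*M*((k:ℝ)+(S.card:ℝ)) * (ε/c) ≤ ε/2 := by
      rw [mul_div_assoc', div_le_div_iff₀ hc0 (by norm_num : (0:ℝ) < 2)]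
      have h4 : ε * c = ε * (12 * M * ((k:ℝ) + (S.card:ℝ)) + 1) := by rw [hcdef]
      nlinarith [hε, ha0, h4]
    linarith only [h2, h3]
  have hM2u : 0 ≤ 2*M*((N:ℝ)⁻¹^k) := mul_nonneg (mul_nonneg (by norm_num) hM0) (by positivity)
  have t2 : (2*M*((N:ℝ)⁻¹^k))*(∑ j : Fin k → Fin N, ∑ i, χE i (j i)) ≤ 2*M*(k:ℝ)*(3*δ) :=
    le_trans (mul_le_mul_of_nonneg_left hE hM2u) e2
  have t3 : (2*M*((N:ℝ)⁻¹^k))*(∑ j : Fin k → Fin N, ∑ s ∈ S, ∏ i, χS s i (j i))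
      ≤ 2*M*(S.card:ℝ)*(3*δ) :=
    le_trans (mul_le_mul_of_nonneg_left hP hM2u) e3
  have hstep1 : (N:ℝ)⁻¹^k * (∑ j : Fin k → Fin N, f fun i => ((j i : ℝ) + x i)/(N:ℝ)) - 1
      = ∑ j : Fin k → Fin N, (((N:ℝ)⁻¹^k) * f (t j) - ∫ y in Q j, f y) := by
    rw [Finset.sum_sub_distrib, ← Finset.mul_sum, hsum1]
    simp only [htdef]
  rw [hstep1]
  calc |∑ j : Fin k → Fin N, (((N:ℝ)⁻¹^k) * f (t j) - ∫ y in Q j, f y)|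
      ≤ ∑ j : Fin k → Fin N, |((N:ℝ)⁻¹^k) * f (t j) - ∫ y in Q j, f y| :=
        Finset.abs_sum_le_sum_abs _ _
    _ ≤ ∑ j : Fin k → Fin N, B j * ((N:ℝ)⁻¹^k) := Finset.sum_le_sum fun j _ => hcube j
    _ ≤ ∑ j : Fin k → Fin N, ((ε/2)*((N:ℝ)⁻¹^k) + (2*M*((N:ℝ)⁻¹^k))*(∑ i, χE i (j i))
          + (2*M*((N:ℝ)⁻¹^k))*(∑ s ∈ S, ∏ i, χS s i (j i))) := by
        apply Finset.sum_le_sum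
        intro j _
        calc B j * ((N:ℝ)⁻¹^k)
            ≤ (ε/2 + 2*M*((∑ i, χE i (j i)) + ∑ s ∈ S, ∏ i, χS s i (j i))) * ((N:ℝ)⁻¹^k) :=
              mul_le_mul_of_nonneg_right (hpoint j) hu0
          _ = (ε/2)*((N:ℝ)⁻¹^k) + (2*M*((N:ℝ)⁻¹^k))*(∑ i, χE i (j i))
              + (2*M*((N:ℝ)⁻¹^k))*(∑ s ∈ S, ∏ i, χS s i (j i)) := by ring
    _ = (ε/2)*((N:ℝ)⁻¹^k)*((Finset.univ : Finset (Fin k → Fin N)).card : ℝ)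
        + (2*M*((N:ℝ)⁻¹^k))*(∑ j : Fin k → Fin N, ∑ i, χE i (j i))
        + (2*M*((N:ℝ)⁻¹^k))*(∑ j : Fin k → Fin N, ∑ s ∈ S, ∏ i, χS s i (j i)) := by
        rw [Finset.sum_add_distrib, Finset.sum_add_distrib, Finset.sum_const,
          ← Finset.mul_sum, ← Finset.mul_sum, nsmul_eq_mul]
        ring
    _ ≤ ε := by
        rw [e1]
        linarith only [t2, t3, hfinal]


/-- `f_n(x) = q^{−nk} Σ_{j ∈ {0,…,q^n−1}^k} f(q^{−n}(j+x))`, the density of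
`T^n(X)` when `X` has density `f` and `T` is applied coordinatewise. -/
noncomputable def fIterk (q k : ℕ) (f : (Fin k → ℝ) → ℝ) (n : ℕ) (x : Fin k → ℝ) : ℝ :=
  (q : ℝ) ^ (-(n * k : ℤ)) *
    ∑ j : Fin k → Fin (q ^ n), f (fun i => ((j i : ℝ) + x i) / (q : ℝ) ^ n)

theorem stmt19
    (q k : ℕ) (hq : 2 ≤ q) (hk : 1 ≤ k)
    (f : (Fin k → ℝ) → ℝ) (hf_meas : Measurable f) (hf_nonneg : ∀ x, 0 ≤ f x)
    (hf_supp : ∀ x, x ∉ {y : Fin k → ℝ | ∀ i, y i ∈ Set.Ioo (0:ℝ) 1} → f x = 0)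
    (hf_pdf : ∫ x in {y : Fin k → ℝ | ∀ i, y i ∈ Set.Ioo (0:ℝ) 1}, f x = 1)
    -- `‖f‖_∞ < ∞`
    (hbdd : BddAbove ((fun x => |f x|) '' {y : Fin k → ℝ | ∀ i, y i ∈ Set.Ioo (0:ℝ) 1}))
    -- `f` is continuous on `(0,1)^k` except at finitely many points
    (hcont : ∃ S : Finset (Fin k → ℝ),
      ∀ x ∈ {y : Fin k → ℝ | ∀ i, y i ∈ Set.Ioo (0:ℝ) 1}, x ∉ S → ContinuousAt f x) :
    TendstoUniformlyOn (fun n x => fIterk q k f n x) (fun _ => 1) atTop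
      {y : Fin k → ℝ | ∀ i, y i ∈ Set.Ioo (0:ℝ) 1} := by
  rw [Metric.tendstoUniformlyOn_iff]
  intro ε hε
  obtain ⟨N₀, hN₀⟩ := main_bound k hk f hf_meas hf_nonneg hf_supp hf_pdf hbdd hcont (half_pos hε)
  rw [eventually_atTop]
  refine ⟨N₀, fun n hn x hx => ?_⟩
  have hqn : N₀ ≤ q^n := le_trans hn (show n < q ^ n from Nat.lt_pow_self (by omega)).le
  have h := hN₀ (q^n) hqn x hx
  have heq : fIterk q k f n x = ((q^n : ℕ):ℝ)⁻¹^k *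
      (∑ j : Fin k → Fin (q^n), f fun i => ((j i : ℝ) + x i) / ((q^n : ℕ):ℝ)) := by
    unfold fIterk
    have h1 : ((q^n : ℕ):ℝ) = (q:ℝ)^n := by push_cast; rfl
    rw [h1]
    congr 1
    rw [inv_pow, ← pow_mul, ← zpow_natCast (q:ℝ) (n*k), ← zpow_neg]
    congr 1
  rw [Real.dist_eq, abs_sub_comm, heq]
  exact lt_of_le_of_lt h (by linarith)
end
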